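/- arXiv:math/0107098 — 4 statements merged into one kernel-verified Lean document; each statement's English description precedes it below -/
import Mathlib

section
/- Let k be a field and H a finite-dimensional Hopf algebra over k, with antipode S and with S' : H →ₗ[k] H a two-sided linear inverse of S. Let λ : H →ₗ[k] k be a linear functional such that: (a) λ(a*b) = λ(b * S'(S'(a))) for all a, b ∈ H, and (b) the linear map φ : H → Module.Dual k H defined by φ(a)(b) = λ(S(a)*b) is bijective. Then for every a ∈ H one has: φ(a) ∈ C_r if and only if a lies in the center of H. Consequently φ restricts to a linear bijection from the center Z of H onto C_r, and dim_k Z = dim_k C_r. -/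
open scoped TensorProduct

open Coalgebra HopfAlgebra

section Anti
variable {R : Type*} {A : Type*} [CommSemiring R] [Semiring A] [HopfAlgebra R A]
variable {ι κ : Type*}

lemma sum_counit_smul_right (x : A) (rx : Coalgebra.Repr R x ι) :
    ∑ i ∈ rx.index, Coalgebra.counit (R := R) (rx.left i) • rx.right i = x := by
  have h := Coalgebra.sum_counit_tmul_eq rx
  apply_fun (TensorProduct.lid R A) at h
  simp only [map_sum, TensorProduct.lid_tmul, one_smul] at h
  exact h

lemma sum_counit_smul_left (x : A) (rx : Coalgebra.Repr R x ι) :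
    ∑ i ∈ rx.index, Coalgebra.counit (R := R) (rx.right i) • rx.left i = x := by
  have h := Coalgebra.sum_tmul_counit_eq rx
  apply_fun (TensorProduct.rid R A) at h
  simp only [map_sum, TensorProduct.rid_tmul, one_smul] at h
  exact h

/-- Repr of a product. -/
noncomputable def Coalgebra.Repr.mul₂ (x y : A) (rx : Coalgebra.Repr R x ι) (ry : Coalgebra.Repr R y κ) :
    Coalgebra.Repr R (x * y) (ι × κ) where
  index := rx.index ×ˢ ry.index
  left := fun p => rx.left p.1 * ry.left p.2
  right := fun p => rx.right p.1 * ry.right p.2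
  eq := by
    rw [Finset.sum_product, Bialgebra.comul_mul, ← rx.eq, ← ry.eq, Finset.sum_mul_sum]
    simp [Algebra.TensorProduct.tmul_mul_tmul]

lemma L1 (x y : A) (rx : Coalgebra.Repr R x ι) (ry : Coalgebra.Repr R y κ) :
    ∑ l ∈ rx.index, ∑ m ∈ ry.index,
      antipode (R := R) (rx.left l * ry.left m) * (rx.right l * ry.right m)
      = Coalgebra.counit (R := R) (x * y) • (1 : A) := by
  have h := HopfAlgebra.sum_antipode_mul_eq_smul (Coalgebra.Repr.mul₂ x y rx ry)
  simp only [Coalgebra.Repr.mul₂] at h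
  rw [Finset.sum_product] at h
  exact h

lemma L2 (x y : A) (rx : Coalgebra.Repr R x ι) (ry : Coalgebra.Repr R y κ) :
    ∑ l ∈ rx.index, ∑ m ∈ ry.index,
      (rx.left l * ry.left m) * (antipode (R := R) (ry.right m) * antipode (R := R) (rx.right l))
      = (Coalgebra.counit (R := R) x * Coalgebra.counit (R := R) y) • (1 : A) := by
  have hy := HopfAlgebra.sum_mul_antipode_eq_smul ry
  have hx := HopfAlgebra.sum_mul_antipode_eq_smul rx
  calc ∑ l ∈ rx.index, ∑ m ∈ ry.index,
      (rx.left l * ry.left m) * (antipode (R := R) (ry.right m) * antipode (R := R) (rx.right l))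
      = ∑ l ∈ rx.index, rx.left l *
          ((∑ m ∈ ry.index, ry.left m * antipode (R := R) (ry.right m)) * antipode (R := R) (rx.right l)) := by
        refine Finset.sum_congr rfl fun l _ => ?_
        rw [Finset.sum_mul, Finset.mul_sum]
        refine Finset.sum_congr rfl fun m _ => ?_
        simp only [mul_assoc]
    _ = ∑ l ∈ rx.index, Coalgebra.counit (R := R) y • (rx.left l * antipode (R := R) (rx.right l)) := by
        refine Finset.sum_congr rfl fun l _ => ?_
        rw [hy, smul_mul_assoc, one_mul, mul_smul_comm]
    _ = Coalgebra.counit (R := R) y • (Coalgebra.counit (R := R) x • (1 : A)) := by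
        rw [← Finset.smul_sum, hx]
    _ = (Coalgebra.counit (R := R) x * Coalgebra.counit (R := R) y) • (1 : A) := by
        rw [smul_smul, mul_comm]

end Anti

section Phi
variable (R : Type*) (A : Type*) [CommSemiring R] [Semiring A] [HopfAlgebra R A]

/-- Auxiliary 6-linear map for the antipode anti-multiplicativity proof. -/
noncomputable def PhiMap :
    ((A ⊗[R] (A ⊗[R] A)) ⊗[R] (A ⊗[R] (A ⊗[R] A))) →ₗ[R] A :=
  LinearMap.mul' R A ∘ₗ
    TensorProduct.map
      (HopfAlgebra.antipode (R := R) ∘ₗ LinearMap.mul' R A)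
      (LinearMap.mul' R A ∘ₗ
        TensorProduct.map (LinearMap.mul' R A)
          (LinearMap.mul' R A ∘ₗ
            TensorProduct.map (HopfAlgebra.antipode (R := R)) (HopfAlgebra.antipode (R := R)) ∘ₗ
            (TensorProduct.comm R A A).toLinearMap) ∘ₗ
        (TensorProduct.tensorTensorTensorComm R A A A A).toLinearMap) ∘ₗ
    (TensorProduct.tensorTensorTensorComm R A (A ⊗[R] A) A (A ⊗[R] A)).toLinearMap

variable {R A}

lemma PhiMap_tmul (x1 x2 x3 y1 y2 y3 : A) :
    PhiMap R A ((x1 ⊗ₜ (x2 ⊗ₜ x3)) ⊗ₜ (y1 ⊗ₜ (y2 ⊗ₜ y3))) =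
      antipode (R := R) (x1 * y1) *
        ((x2 * y2) * (antipode (R := R) y3 * antipode (R := R) x3)) := by
  simp [PhiMap, TensorProduct.tensorTensorTensorComm_tmul]

end Phi

section Anti2
variable {R : Type*} {A : Type*} [CommSemiring R] [Semiring A] [HopfAlgebra R A]
variable {R : Type*} {A : Type*} [CommSemiring R] [Semiring A] [HopfAlgebra R A]
variable {ι κ : Type*}

lemma innerL (x y w : A) (rx : Coalgebra.Repr R x ι) (ry : Coalgebra.Repr R y κ) :
    ∑ l ∈ rx.index, ∑ m ∈ ry.index,
      antipode (R := R) (rx.left l * ry.left m) * ((rx.right l * ry.right m) * w)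
      = Coalgebra.counit (R := R) (x * y) • w := by
  calc ∑ l ∈ rx.index, ∑ m ∈ ry.index,
      antipode (R := R) (rx.left l * ry.left m) * ((rx.right l * ry.right m) * w)
      = (∑ l ∈ rx.index, ∑ m ∈ ry.index,
          antipode (R := R) (rx.left l * ry.left m) * (rx.right l * ry.right m)) * w := by
        rw [Finset.sum_mul]
        refine Finset.sum_congr rfl fun l _ => ?_
        rw [Finset.sum_mul]
        exact Finset.sum_congr rfl fun m _ => (mul_assoc _ _ _).symm
    _ = (Coalgebra.counit (R := R) (x * y) • (1 : A)) * w := by rw [L1 x y rx ry]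
    _ = Coalgebra.counit (R := R) (x * y) • w := by rw [smul_mul_assoc, one_mul]

theorem antipode_mul_anti (a b : A) :
    antipode (R := R) (a * b) = antipode (R := R) b * antipode (R := R) a := by
  classical
  let ra := Coalgebra.Repr.arbitrary R a
  let rb := Coalgebra.Repr.arbitrary R b
  let rla : (i : ra.ι) → Coalgebra.Repr R (ra.left i) (A × A) := fun i => Coalgebra.Repr.arbitrary R (ra.left i)
  let rra : (i : ra.ι) → Coalgebra.Repr R (ra.right i) (A × A) := fun i => Coalgebra.Repr.arbitrary R (ra.right i)
  let rlb : (j : rb.ι) → Coalgebra.Repr R (rb.left j) (A × A) := fun j => Coalgebra.Repr.arbitrary R (rb.left j)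
  let rrb : (j : rb.ι) → Coalgebra.Repr R (rb.right j) (A × A) := fun j => Coalgebra.Repr.arbitrary R (rb.right j)
  have Ta := Coalgebra.sum_tmul_tmul_eq ra rla rra
  have Tb := Coalgebra.sum_tmul_tmul_eq rb rlb rrb
  have key := congrArg (PhiMap R A) (congrArg₂ (· ⊗ₜ[R] ·) Ta Tb)
  simp only [TensorProduct.sum_tmul, TensorProduct.tmul_sum, map_sum, PhiMap_tmul] at key
  have hSb : ∑ j ∈ rb.index, Coalgebra.counit (R := R) (rb.left j) • antipode (R := R) (rb.right j)
      = antipode (R := R) b := by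
    simp only [← map_smul]
    rw [← map_sum, sum_counit_smul_right]
  have hSa : ∑ i ∈ ra.index, Coalgebra.counit (R := R) (ra.left i) • antipode (R := R) (ra.right i)
      = antipode (R := R) a := by
    simp only [← map_smul]
    rw [← map_sum, sum_counit_smul_right]
  have hL : ∑ j ∈ rb.index, ∑ m ∈ (rlb j).index, ∑ i ∈ ra.index, ∑ l ∈ (rla i).index,
      antipode (R := R) ((rla i).left l * (rlb j).left m) *
        ((rla i).right l * (rlb j).right m *
          (antipode (R := R) (rb.right j) * antipode (R := R) (ra.right i)))
      = antipode (R := R) b * antipode (R := R) a := by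
    calc ∑ j ∈ rb.index, ∑ m ∈ (rlb j).index, ∑ i ∈ ra.index, ∑ l ∈ (rla i).index,
        antipode (R := R) ((rla i).left l * (rlb j).left m) *
          ((rla i).right l * (rlb j).right m *
            (antipode (R := R) (rb.right j) * antipode (R := R) (ra.right i)))
        = ∑ j ∈ rb.index, ∑ i ∈ ra.index, ∑ l ∈ (rla i).index, ∑ m ∈ (rlb j).index,
        antipode (R := R) ((rla i).left l * (rlb j).left m) *
          ((rla i).right l * (rlb j).right m *
            (antipode (R := R) (rb.right j) * antipode (R := R) (ra.right i))) := by
          refine Finset.sum_congr rfl fun j _ => ?_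
          rw [Finset.sum_comm]
          exact Finset.sum_congr rfl fun i _ => Finset.sum_comm
      _ = ∑ j ∈ rb.index, ∑ i ∈ ra.index,
          Coalgebra.counit (R := R) (ra.left i * rb.left j) •
            (antipode (R := R) (rb.right j) * antipode (R := R) (ra.right i)) := by
          exact Finset.sum_congr rfl fun j _ => Finset.sum_congr rfl fun i _ =>
            innerL _ _ _ (rla i) (rlb j)
      _ = ∑ j ∈ rb.index, Coalgebra.counit (R := R) (rb.left j) •
            (antipode (R := R) (rb.right j) *
              ∑ i ∈ ra.index, Coalgebra.counit (R := R) (ra.left i) • antipode (R := R) (ra.right i)) := by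
          refine Finset.sum_congr rfl fun j _ => ?_
          rw [Finset.mul_sum, Finset.smul_sum]
          refine Finset.sum_congr rfl fun i _ => ?_
          rw [Bialgebra.counit_mul, mul_comm, mul_smul, mul_smul_comm]
      _ = antipode (R := R) b * antipode (R := R) a := by
          rw [hSa]
          simp only [← smul_mul_assoc]
          rw [← Finset.sum_mul, hSb]
  have hR : ∑ j ∈ rb.index, ∑ m ∈ (rrb j).index, ∑ i ∈ ra.index, ∑ l ∈ (rra i).index,
      antipode (R := R) (ra.left i * rb.left j) *
        ((rra i).left l * (rrb j).left m *
          (antipode (R := R) ((rrb j).right m) * antipode (R := R) ((rra i).right l)))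
      = antipode (R := R) (a * b) := by
    calc ∑ j ∈ rb.index, ∑ m ∈ (rrb j).index, ∑ i ∈ ra.index, ∑ l ∈ (rra i).index,
        antipode (R := R) (ra.left i * rb.left j) *
          ((rra i).left l * (rrb j).left m *
            (antipode (R := R) ((rrb j).right m) * antipode (R := R) ((rra i).right l)))
        = ∑ j ∈ rb.index, ∑ i ∈ ra.index, ∑ l ∈ (rra i).index, ∑ m ∈ (rrb j).index,
        antipode (R := R) (ra.left i * rb.left j) *
          ((rra i).left l * (rrb j).left m *
            (antipode (R := R) ((rrb j).right m) * antipode (R := R) ((rra i).right l))) := by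
          refine Finset.sum_congr rfl fun j _ => ?_
          rw [Finset.sum_comm]
          exact Finset.sum_congr rfl fun i _ => Finset.sum_comm
      _ = ∑ j ∈ rb.index, ∑ i ∈ ra.index,
          antipode (R := R) (ra.left i * rb.left j) *
            ((Coalgebra.counit (R := R) (ra.right i) * Coalgebra.counit (R := R) (rb.right j)) • (1 : A)) := by
          refine Finset.sum_congr rfl fun j _ => Finset.sum_congr rfl fun i _ => ?_
          rw [← L2 _ _ (rra i) (rrb j), Finset.mul_sum]
          refine Finset.sum_congr rfl fun l _ => ?_
          rw [Finset.mul_sum]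
      _ = ∑ j ∈ rb.index, ∑ i ∈ ra.index,
          antipode (R := R) ((Coalgebra.counit (R := R) (ra.right i) • ra.left i) *
            (Coalgebra.counit (R := R) (rb.right j) • rb.left j)) := by
          refine Finset.sum_congr rfl fun j _ => Finset.sum_congr rfl fun i _ => ?_
          rw [smul_mul_smul_comm, map_smul, mul_smul_comm, mul_one]
      _ = antipode (R := R) (a * b) := by
          simp only [← map_sum]
          congr 1
          calc ∑ j ∈ rb.index, ∑ i ∈ ra.index,
              (Coalgebra.counit (R := R) (ra.right i) • ra.left i) *
                (Coalgebra.counit (R := R) (rb.right j) • rb.left j)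
              = ∑ j ∈ rb.index,
                (∑ i ∈ ra.index, Coalgebra.counit (R := R) (ra.right i) • ra.left i) *
                  (Coalgebra.counit (R := R) (rb.right j) • rb.left j) := by
                exact Finset.sum_congr rfl fun j _ => (Finset.sum_mul _ _ _).symm
            _ = a * b := by
                rw [sum_counit_smul_left, ← Finset.mul_sum, sum_counit_smul_left]
  rw [hL, hR] at key
  exact key.symm


end Anti2

/-- The space `C_r` of linear functionals `p` on `H` with `p(ab) = p(b S⁻²(a))`,
where `S'` plays the role of the inverse antipode `S⁻¹`. -/
def Cr (k : Type*) [Field k] (H : Type*) [Ring H] [HopfAlgebra k H]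
    (S' : H →ₗ[k] H) : Submodule k (Module.Dual k H) where
  carrier := {p | ∀ a b : H, p (a * b) = p (b * S' (S' a))}
  add_mem' := by intro p q hp hq a b; simp [hp a b, hq a b]
  zero_mem' := by intro a b; simp
  smul_mem' := by intro c p hp a b; simp [hp a b]

/-- **Corollary `ZC`**: for a finite-dimensional Hopf algebra `H` with antipode `S`,
inverse antipode `S'`, and a functional `λ` satisfying Radford's trace property
`λ(ab) = λ(b S⁻²(a))` such that `φ(a)(b) = λ(S(a) b)` is bijective, one has
`φ(a) ∈ C_r ↔ a ∈ Z(H)`; consequently `φ` restricts to a bijection of the center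
onto `C_r` and `dim Z(H) = dim C_r`. -/
theorem center_image_eq_Cr (k : Type*) [Field k] (H : Type*) [Ring H] [HopfAlgebra k H]
    [FiniteDimensional k H]
    (S' : H →ₗ[k] H)
    (hS'S : ∀ a : H, S' (HopfAlgebra.antipode (R := k) a) = a)
    (hSS' : ∀ a : H, HopfAlgebra.antipode (R := k) (S' a) = a)
    (lam : Module.Dual k H)
    (hlam : ∀ a b : H, lam (a * b) = lam (b * S' (S' a)))
    (φ : H →ₗ[k] Module.Dual k H)
    (hφ : ∀ a b : H, φ a b = lam (HopfAlgebra.antipode (R := k) a * b))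
    (hbij : Function.Bijective φ) :
    (∀ a : H, φ a ∈ Cr k H S' ↔ a ∈ Subalgebra.center k H) ∧
    Module.finrank k (Subalgebra.center k H) = Module.finrank k (Cr k H S') := by
  have Smul : ∀ x y : H,
      HopfAlgebra.antipode (R := k) (x * y) =
        HopfAlgebra.antipode (R := k) y * HopfAlgebra.antipode (R := k) x :=
    fun x y => antipode_mul_anti x y
  have Sinj : Function.Injective (HopfAlgebra.antipode (R := k) (A := H)) :=
    Function.LeftInverse.injective hS'S
  have S'mul : ∀ x y : H, S' (x * y) = S' y * S' x := by
    intro x y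
    apply Sinj
    rw [hSS', Smul, hSS', hSS']
  have nondeg : ∀ c : H, (∀ u : H, lam (u * c) = 0) → c = 0 := by
    intro c h
    rw [← Module.forall_dual_apply_eq_zero_iff k c]
    intro f
    obtain ⟨x, rfl⟩ := hbij.2 f
    rw [hφ]
    exact h _
  have eqd : ∀ c d : H, (∀ u : H, lam (u * c) = lam (u * d)) → c = d := by
    intro c d h
    have h0 := nondeg (c - d) (fun u => by rw [mul_sub, map_sub, h, sub_self])
    exact sub_eq_zero.mp h0
  -- `φ a ∈ Cr ↔ S' a central`
  have key : ∀ a : H, φ a ∈ Cr k H S' ↔ S' a ∈ Subalgebra.center k H := by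
    intro a
    have e0 : ∀ x : H, lam (HopfAlgebra.antipode (R := k) a * x) = lam (x * S' a) := by
      intro x
      rw [hlam (HopfAlgebra.antipode (R := k) a) x, hS'S]
    have cond : ∀ u v : H,
        (φ a (u * v) = φ a (v * S' (S' u))) ↔
          (lam (v * (S' a * S' (S' u))) = lam (v * (S' (S' u) * S' a))) := by
      intro u v
      rw [hφ a (u * v), hφ a (v * S' (S' u)), e0 (u * v), e0 (v * S' (S' u)),
        mul_assoc u v (S' a), hlam u (v * S' a), mul_assoc v (S' a) (S' (S' u)),
        mul_assoc v (S' (S' u)) (S' a)]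
    have hmem : φ a ∈ Cr k H S' ↔ ∀ u v : H, φ a (u * v) = φ a (v * S' (S' u)) := Iff.rfl
    rw [hmem, Subalgebra.mem_center_iff]
    constructor
    · intro h c
      have hTc : S' (S' (HopfAlgebra.antipode (R := k) (HopfAlgebra.antipode (R := k) c))) = c := by
        rw [hS'S, hS'S]
      have h2 : ∀ v : H, lam (v * (S' a * c)) = lam (v * (c * S' a)) := by
        intro v
        have h1 := (cond (HopfAlgebra.antipode (R := k) (HopfAlgebra.antipode (R := k) c)) v).mp
          (h _ v)
        rwa [hTc] at h1
      exact (eqd _ _ h2).symm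
    · intro hc u v
      rw [cond u v, hc (S' (S' u))]
  -- centrality transfer
  have cen_S' : ∀ x : H, x ∈ Subalgebra.center k H → S' x ∈ Subalgebra.center k H := by
    intro x hx
    rw [Subalgebra.mem_center_iff] at hx ⊢
    intro g
    calc g * S' x = S' (HopfAlgebra.antipode (R := k) g) * S' x := by rw [hS'S]
      _ = S' (x * HopfAlgebra.antipode (R := k) g) := (S'mul _ _).symm
      _ = S' (HopfAlgebra.antipode (R := k) g * x) := by rw [← hx (HopfAlgebra.antipode (R := k) g)]
      _ = S' x * S' (HopfAlgebra.antipode (R := k) g) := S'mul _ _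
      _ = S' x * g := by rw [hS'S]
  have cen_S : ∀ x : H, x ∈ Subalgebra.center k H →
      HopfAlgebra.antipode (R := k) x ∈ Subalgebra.center k H := by
    intro x hx
    rw [Subalgebra.mem_center_iff] at hx ⊢
    intro g
    calc g * HopfAlgebra.antipode (R := k) x
        = HopfAlgebra.antipode (R := k) (S' g) * HopfAlgebra.antipode (R := k) x := by rw [hSS']
      _ = HopfAlgebra.antipode (R := k) (x * S' g) := (Smul _ _).symm
      _ = HopfAlgebra.antipode (R := k) (S' g * x) := by rw [← hx (S' g)]
      _ = HopfAlgebra.antipode (R := k) x * HopfAlgebra.antipode (R := k) (S' g) := Smul _ _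
      _ = HopfAlgebra.antipode (R := k) x * g := by rw [hSS']
  have main : ∀ a : H, φ a ∈ Cr k H S' ↔ a ∈ Subalgebra.center k H := by
    intro a
    rw [key a]
    constructor
    · intro h
      have h2 := cen_S _ h
      rwa [hSS'] at h2
    · exact cen_S' a
  refine ⟨main, ?_⟩
  have hmap : Submodule.map φ (Subalgebra.toSubmodule (Subalgebra.center k H)) = Cr k H S' := by
    ext p
    simp only [Submodule.mem_map, Subalgebra.mem_toSubmodule]
    constructor
    · rintro ⟨x, hx, rfl⟩
      exact (main x).mpr hx
    · intro hp
      obtain ⟨x, rfl⟩ := hbij.2 p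
      exact ⟨x, (main x).mp hp, rfl⟩
  have hfr : Module.finrank k (Subalgebra.toSubmodule (Subalgebra.center k H)) =
      Module.finrank k (Submodule.map φ (Subalgebra.toSubmodule (Subalgebra.center k H))) :=
    LinearEquiv.finrank_eq
      (Submodule.equivMapOfInjective φ hbij.1 (Subalgebra.toSubmodule (Subalgebra.center k H)))
  rw [hmap] at hfr
  rw [← Subalgebra.finrank_toSubmodule]
  exact hfr
end

section
/- Let k be a field and H a Hopf algebra over k with antipode S and with S' : H →ₗ[k] H a two-sided linear inverse of S. Suppose g, g' ∈ H satisfy g*g' = 1 = g'*g and S(S(a)) = g' * a * g for all a ∈ H. If μ : H →ₗ[k] k is cocommutative in the sense that μ(a*b) = μ(b*a) for all a, b ∈ H, then the functional p : H →ₗ[k] k defined by p(b) = μ(b*g) satisfies p(a*b) = p(b * S'(S'(a))) for all a, b ∈ H; that is, p ∈ C_r. -/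
/-- **Remark after Corollary `ZC`**: if `S² = Ad(g')` for a pair of mutually inverse
elements `g, g'` (in the small quantum group `g = K_{2ρ}`, `g' = K_{-2ρ}`), then for
any cocommutative functional `μ` the functional `p(b) = μ(b g)` lies in `C_r`,
i.e. `p(ab) = p(b S⁻²(a))` where `S'` is the inverse antipode. -/
theorem cocommutative_shift_mem_Cr (k : Type*) [Field k] (H : Type*) [Ring H]
    [HopfAlgebra k H]
    (S' : H →ₗ[k] H)
    (hS'S : ∀ a : H, S' (HopfAlgebra.antipode (R := k) a) = a)
    (hSS' : ∀ a : H, HopfAlgebra.antipode (R := k) (S' a) = a)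
    (g g' : H) (hgg' : g * g' = 1) (hg'g : g' * g = 1)
    (hS2 : ∀ a : H,
      HopfAlgebra.antipode (R := k) (HopfAlgebra.antipode (R := k) a) = g' * a * g)
    (μ : Module.Dual k H) (hμ : ∀ a b : H, μ (a * b) = μ (b * a)) :
    ∀ a b : H, μ ((a * b) * g) = μ ((b * S' (S' a)) * g) := by
  intro a b
  have key : S' (S' a) = g * a * g' := by
    have h1 : HopfAlgebra.antipode (R := k)
        (HopfAlgebra.antipode (R := k) (g * a * g')) = a := by
      rw [hS2]
      calc g' * (g * a * g') * g = (g' * g) * a * (g' * g) := by noncomm_ring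
        _ = a := by rw [hg'g]; simp
    calc S' (S' a) = S' (S' (HopfAlgebra.antipode (R := k)
          (HopfAlgebra.antipode (R := k) (g * a * g')))) := by rw [h1]
      _ = g * a * g' := by rw [hS'S, hS'S]
  rw [key]
  have : b * (g * a * g') * g = b * g * a := by
    calc b * (g * a * g') * g = (b * g) * a * (g' * g) := by noncomm_ring
      _ = b * g * a := by rw [hg'g]; simp
  rw [this, mul_assoc a b g, hμ]
end

section
/- Let l ≥ 5 be an odd integer not divisible by 3. Define two permutations of ZMod l × ZMod l by σ₁(a,b) = (-a-2, a+b+1) and σ₂(a,b) = (a+b+1, -b-2) (the shifted actions of the two simple reflections of the Weyl group of sl₃ on P/lP). Then: (1) σ₁² = 1, σ₂² = 1 and (σ₁ * σ₂)³ = 1 in Equiv.Perm (ZMod l × ZMod l), and the subgroup G generated by σ₁ and σ₂ has order 6 (it is isomorphic to the symmetric group S₃); (2) the action of G on ZMod l × ZMod l has exactly one singleton orbit, namely {(-1,-1)}, exactly l-1 orbits of cardinality 3, and exactly (l-1)(l-2)/6 orbits of cardinality 6; (3) in particular the total number of G-orbits equals 1 + (l-1) + (l-1)(l-2)/6. -/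
open Equiv MulAction

section GroupAux

variable {M : Type*} [Group M] {s t : M}

def sl3E (s t : M) : Set M := {1, s, t, s*t, t*s, s*t*s}

lemma sl3_lmul_s (r1 : s*s = 1) : ∀ g ∈ sl3E s t, s*g ∈ sl3E s t := by
  rintro g hg
  simp only [sl3E, Set.mem_insert_iff, Set.mem_singleton_iff] at hg ⊢
  rcases hg with rfl|rfl|rfl|rfl|rfl|rfl
  · simp
  · rw [r1]; simp
  · simp
  · rw [← mul_assoc, r1, one_mul]; simp
  · rw [← mul_assoc]; simp
  · rw [show s*(s*t*s) = (s*s)*(t*s) by group, r1, one_mul]; simp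

lemma sl3_lmul_t (r1 : s*s = 1) (r2 : t*t = 1) (rsts : s*t*s = t*s*t) :
    ∀ g ∈ sl3E s t, t*g ∈ sl3E s t := by
  rintro g hg
  simp only [sl3E, Set.mem_insert_iff, Set.mem_singleton_iff] at hg ⊢
  rcases hg with rfl|rfl|rfl|rfl|rfl|rfl
  · simp
  · simp
  · rw [r2]; simp
  · rw [← mul_assoc, ← rsts]; simp
  · rw [show t*(t*s) = (t*t)*s by group, r2, one_mul]; simp
  · rw [show t*(s*t*s) = (t*s*t)*s by group, ← rsts,
      show (s*t*s)*s = (s*t)*(s*s) by group, r1, mul_one]; simp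

/-- The six-element set is a subgroup. -/
def sl3Subgroup (r1 : s*s = 1) (r2 : t*t = 1) (rsts : s*t*s = t*s*t) : Subgroup M where
  carrier := sl3E s t
  one_mem' := by simp [sl3E]
  mul_mem' := by
    intro a b ha hb
    simp only [sl3E, Set.mem_insert_iff, Set.mem_singleton_iff] at ha
    rcases ha with rfl|rfl|rfl|rfl|rfl|rfl
    · rw [one_mul]; exact hb
    · exact sl3_lmul_s r1 b hb
    · exact sl3_lmul_t r1 r2 rsts b hb
    · rw [mul_assoc]; exact sl3_lmul_s r1 _ (sl3_lmul_t r1 r2 rsts b hb)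
    · rw [mul_assoc]; exact sl3_lmul_t r1 r2 rsts _ (sl3_lmul_s r1 b hb)
    · rw [show (s*t*s)*b = s*(t*(s*b)) by group]
      exact sl3_lmul_s r1 _ (sl3_lmul_t r1 r2 rsts _ (sl3_lmul_s r1 b hb))
  inv_mem' := by
    intro a ha
    simp only [sl3E, Set.mem_insert_iff, Set.mem_singleton_iff] at ha ⊢
    have hs : s⁻¹ = s := inv_eq_of_mul_eq_one_right r1
    have ht : t⁻¹ = t := inv_eq_of_mul_eq_one_right r2
    rcases ha with rfl|rfl|rfl|rfl|rfl|rfl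
    · simp
    · simp [hs]
    · simp [ht]
    · rw [mul_inv_rev, hs, ht]; simp
    · rw [mul_inv_rev, hs, ht]; simp
    · rw [mul_inv_rev, mul_inv_rev, hs, ht, mul_assoc]; simp

lemma sl3_closure_eq (r1 : s*s = 1) (r2 : t*t = 1) (rsts : s*t*s = t*s*t) :
    (Subgroup.closure {s, t} : Set M) = sl3E s t := by
  apply le_antisymm
  · exact (Subgroup.closure_le (sl3Subgroup r1 r2 rsts)).2 (by
      rintro g (rfl|rfl) <;> simp [sl3Subgroup, sl3E])
  · rintro g hg
    have hsm : s ∈ Subgroup.closure {s, t} := Subgroup.subset_closure (by simp)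
    have htm : t ∈ Subgroup.closure {s, t} := Subgroup.subset_closure (by simp)
    simp only [sl3E, Set.mem_insert_iff, Set.mem_singleton_iff] at hg
    rcases hg with rfl|rfl|rfl|rfl|rfl|rfl
    · exact Subgroup.one_mem _
    · exact hsm
    · exact htm
    · exact mul_mem hsm htm
    · exact mul_mem htm hsm
    · exact mul_mem (mul_mem hsm htm) hsm

end GroupAux


section PermAux

variable {l : ℕ} {σ₁ σ₂ : Equiv.Perm (ZMod l × ZMod l)}
variable (hσ₁ : ∀ a b : ZMod l, σ₁ (a, b) = (-a - 2, a + b + 1))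
variable (hσ₂ : ∀ a b : ZMod l, σ₂ (a, b) = (a + b + 1, -b - 2))

include hσ₁ hσ₂

lemma sl3_e3 (a b : ZMod l) : (σ₁ * σ₂) (a, b) = (-a-b-3, a) := by
  simp only [Equiv.Perm.mul_apply, hσ₁, hσ₂, Prod.mk.injEq]
  constructor <;> ring

lemma sl3_e4 (a b : ZMod l) : (σ₂ * σ₁) (a, b) = (b, -a-b-3) := by
  simp only [Equiv.Perm.mul_apply, hσ₁, hσ₂, Prod.mk.injEq]
  constructor <;> ring

lemma sl3_e5 (a b : ZMod l) : (σ₁ * σ₂ * σ₁) (a, b) = (-b-2, -a-2) := by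
  simp only [Equiv.Perm.mul_apply, hσ₁, hσ₂, Prod.mk.injEq]
  constructor <;> ring

omit hσ₂ in
lemma sl3_r1 : σ₁ * σ₁ = 1 := by
  apply Equiv.ext; rintro ⟨a, b⟩
  simp only [Equiv.Perm.mul_apply, hσ₁, Equiv.Perm.one_apply, Prod.mk.injEq]
  constructor <;> ring

omit hσ₁ in
lemma sl3_r2 : σ₂ * σ₂ = 1 := by
  apply Equiv.ext; rintro ⟨a, b⟩
  simp only [Equiv.Perm.mul_apply, hσ₂, Equiv.Perm.one_apply, Prod.mk.injEq]
  constructor <;> ring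

lemma sl3_rsts : σ₁ * σ₂ * σ₁ = σ₂ * σ₁ * σ₂ := by
  apply Equiv.ext; rintro ⟨a, b⟩
  simp only [Equiv.Perm.mul_apply, hσ₁, hσ₂, Prod.mk.injEq]
  constructor <;> ring

lemma sl3_r3 : (σ₁ * σ₂) ^ 3 = 1 := by
  have h3 : (σ₁ * σ₂) ^ 3 = σ₁*σ₂ * (σ₁*σ₂) * (σ₁*σ₂) := by
    rw [pow_succ, pow_succ, pow_one]
  rw [h3]
  apply Equiv.ext; rintro ⟨a, b⟩
  simp only [Equiv.Perm.mul_apply, hσ₁, hσ₂, Equiv.Perm.one_apply, Prod.mk.injEq]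
  constructor <;> ring

end PermAux


section OrbAux
variable {l : ℕ} {σ₁ σ₂ : Equiv.Perm (ZMod l × ZMod l)}
variable (hσ₁ : ∀ a b : ZMod l, σ₁ (a, b) = (-a - 2, a + b + 1))
variable (hσ₂ : ∀ a b : ZMod l, σ₂ (a, b) = (a + b + 1, -b - 2))

include hσ₁ hσ₂ in
lemma sl3_orbit
    (hE : (Subgroup.closure {σ₁, σ₂} : Set (Equiv.Perm (ZMod l × ZMod l))) = sl3E σ₁ σ₂)
    (e3 : ∀ a b : ZMod l, (σ₁ * σ₂) (a, b) = (-a-b-3, a))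
    (e4 : ∀ a b : ZMod l, (σ₂ * σ₁) (a, b) = (b, -a-b-3))
    (e5 : ∀ a b : ZMod l, (σ₁ * σ₂ * σ₁) (a, b) = (-b-2, -a-2))
    (a b : ZMod l) :
    MulAction.orbit (Subgroup.closure {σ₁, σ₂}) ((a, b) : ZMod l × ZMod l) =
      {(a,b), (-a-2, a+b+1), (a+b+1, -b-2), (-a-b-3, a), (b, -a-b-3), (-b-2, -a-2)} := by
  have hsm : σ₁ ∈ Subgroup.closure {σ₁, σ₂} := Subgroup.subset_closure (by simp)
  have htm : σ₂ ∈ Subgroup.closure {σ₁, σ₂} := Subgroup.subset_closure (by simp)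
  ext y
  constructor
  · rintro ⟨⟨g, hg⟩, rfl⟩
    have hgE : g ∈ sl3E σ₁ σ₂ := by rw [← hE]; exact hg
    show g (a, b) ∈ _
    simp only [sl3E, Set.mem_insert_iff, Set.mem_singleton_iff] at hgE
    simp only [Set.mem_insert_iff, Set.mem_singleton_iff]
    rcases hgE with rfl|rfl|rfl|rfl|rfl|rfl
    · left; rfl
    · right; left; exact hσ₁ a b
    · right; right; left; exact hσ₂ a b
    · right; right; right; left; exact e3 a b
    · right; right; right; right; left; exact e4 a b
    · right; right; right; right; right; exact e5 a b
  · intro hy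
    simp only [Set.mem_insert_iff, Set.mem_singleton_iff] at hy
    rcases hy with rfl|rfl|rfl|rfl|rfl|rfl
    · exact ⟨⟨1, Subgroup.one_mem _⟩, rfl⟩
    · exact ⟨⟨σ₁, hsm⟩, hσ₁ a b⟩
    · exact ⟨⟨σ₂, htm⟩, hσ₂ a b⟩
    · exact ⟨⟨σ₁ * σ₂, mul_mem hsm htm⟩, e3 a b⟩
    · exact ⟨⟨σ₂ * σ₁, mul_mem htm hsm⟩, e4 a b⟩
    · exact ⟨⟨σ₁ * σ₂ * σ₁, mul_mem (mul_mem hsm htm) hsm⟩, e5 a b⟩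

end OrbAux

section CardAux
variable {l : ℕ} {σ₁ σ₂ : Equiv.Perm (ZMod l × ZMod l)}

variable
  (horb : ∀ a b : ZMod l,
    MulAction.orbit (Subgroup.closure {σ₁, σ₂}) ((a, b) : ZMod l × ZMod l) =
      {(a,b), (-a-2, a+b+1), (a+b+1, -b-2), (-a-b-3, a), (b, -a-b-3), (-b-2, -a-2)})
  (canc2 : ∀ x y : ZMod l, 2*x = 2*y → x = y)
  (canc3 : ∀ x y : ZMod l, 3*x = 3*y → x = y)

include horb in
lemma sl3_orbit_st :
    MulAction.orbit (Subgroup.closure {σ₁, σ₂}) ((-1, -1) : ZMod l × ZMod l) = {(-1, -1)} := by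
  rw [horb]
  apply Set.Subset.antisymm
  · rintro y (rfl|rfl|rfl|rfl|rfl|rfl)
    · rfl
    all_goals
      simp only [Set.mem_singleton_iff, Prod.mk.injEq]
      exact ⟨by norm_num, by norm_num⟩
  · intro y hy; rw [Set.mem_singleton_iff] at hy; subst hy; left; rfl

include horb in
lemma sl3_orbit_case2 (b : ZMod l) :
    MulAction.orbit (Subgroup.closure {σ₁, σ₂}) ((-1, b) : ZMod l × ZMod l) =
      {(-1, b), (b, -b-2), (-b-2, -1)} := by
  rw [horb]
  apply Set.Subset.antisymm
  · rintro y (rfl|rfl|rfl|rfl|rfl|rfl)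
    · exact Set.mem_insert _ _
    all_goals simp only [Set.mem_insert_iff, Set.mem_singleton_iff, Prod.mk.injEq]
    · left; exact ⟨by ring, by ring⟩
    · right; left; exact ⟨by ring, by trivial⟩
    · right; right; exact ⟨by ring, by trivial⟩
    · right; left; exact ⟨by trivial, by ring⟩
    · right; right; exact ⟨by trivial, by ring⟩
  · rintro y (rfl|rfl|rfl)
    · exact Set.mem_insert _ _
    all_goals simp only [Set.mem_insert_iff, Set.mem_singleton_iff, Prod.mk.injEq]
    · right; right; left; exact ⟨by ring, by trivial⟩
    · right; right; right; left; exact ⟨by ring, by trivial⟩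

include horb canc2 in
lemma sl3_card_case2 (b : ZMod l) (hb : b ≠ -1) :
    Nat.card (MulAction.orbit (Subgroup.closure {σ₁, σ₂}) ((-1, b) : ZMod l × ZMod l)) = 3 := by
  rw [sl3_orbit_case2 horb b, Nat.card_coe_set_eq]
  rw [Set.ncard_insert_of_notMem, Set.ncard_pair]
  · simp only [ne_eq, Prod.mk.injEq, not_and]
    intro h1 h2
    exact hb (canc2 b (-1) (by linear_combination h1))
  · simp only [Set.mem_insert_iff, Set.mem_singleton_iff, Prod.mk.injEq, not_or]
    exact ⟨fun ⟨h1, h2⟩ => hb h1.symm, fun ⟨h1, h2⟩ => hb h2⟩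

include horb in
lemma sl3_orbit_case3 (a : ZMod l) :
    MulAction.orbit (Subgroup.closure {σ₁, σ₂}) ((a, -1) : ZMod l × ZMod l) =
      {(a, -1), (-a-2, a), (-1, -a-2)} := by
  rw [horb]
  apply Set.Subset.antisymm
  · rintro y (rfl|rfl|rfl|rfl|rfl|rfl)
    · exact Set.mem_insert _ _
    all_goals simp only [Set.mem_insert_iff, Set.mem_singleton_iff, Prod.mk.injEq]
    · right; left; exact ⟨by trivial, by ring⟩
    · left; exact ⟨by ring, by ring⟩
    · right; left; exact ⟨by ring, by trivial⟩
    · right; right; exact ⟨by trivial, by ring⟩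
    · right; right; exact ⟨by ring, by trivial⟩
  · rintro y (rfl|rfl|rfl)
    · exact Set.mem_insert _ _
    all_goals simp only [Set.mem_insert_iff, Set.mem_singleton_iff, Prod.mk.injEq]
    · right; left; exact ⟨by trivial, by ring⟩
    · right; right; right; right; left; exact ⟨by trivial, by ring⟩

include horb in
lemma sl3_card_case3 (a : ZMod l) (ha : a ≠ -1) :
    Nat.card (MulAction.orbit (Subgroup.closure {σ₁, σ₂}) ((a, -1) : ZMod l × ZMod l)) = 3 := by
  rw [sl3_orbit_case3 horb a, Nat.card_coe_set_eq]
  rw [Set.ncard_insert_of_notMem, Set.ncard_pair]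
  · simp only [ne_eq, Prod.mk.injEq, not_and]
    intro h1 h2
    exact ha (by linear_combination -h1)
  · simp only [Set.mem_insert_iff, Set.mem_singleton_iff, Prod.mk.injEq, not_or]
    exact ⟨fun ⟨h1, h2⟩ => ha h2.symm, fun ⟨h1, h2⟩ => ha h1⟩

include horb in
lemma sl3_orbit_case4 (a b : ZMod l) (hab : a + b = -2) :
    MulAction.orbit (Subgroup.closure {σ₁, σ₂}) ((a, b) : ZMod l × ZMod l) =
      {(a, b), (b, -1), (-1, a)} := by
  rw [horb]
  apply Set.Subset.antisymm
  · rintro y (rfl|rfl|rfl|rfl|rfl|rfl)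
    · exact Set.mem_insert _ _
    all_goals simp only [Set.mem_insert_iff, Set.mem_singleton_iff, Prod.mk.injEq]
    · right; left; exact ⟨by linear_combination -hab, by linear_combination hab⟩
    · right; right; exact ⟨by linear_combination hab, by linear_combination -hab⟩
    · right; right; exact ⟨by linear_combination -hab, by trivial⟩
    · right; left; exact ⟨by trivial, by linear_combination -hab⟩
    · left; exact ⟨by linear_combination -hab, by linear_combination -hab⟩
  · rintro y (rfl|rfl|rfl)
    · exact Set.mem_insert _ _
    all_goals simp only [Set.mem_insert_iff, Set.mem_singleton_iff, Prod.mk.injEq]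
    · right; right; right; right; left; exact ⟨by trivial, by linear_combination hab⟩
    · right; right; right; left; exact ⟨by linear_combination hab, by trivial⟩

include horb in
lemma sl3_card_case4 (a b : ZMod l) (hab : a + b = -2) (ha : a ≠ -1) (hb : b ≠ -1) :
    Nat.card (MulAction.orbit (Subgroup.closure {σ₁, σ₂}) ((a, b) : ZMod l × ZMod l)) = 3 := by
  rw [sl3_orbit_case4 horb a b hab, Nat.card_coe_set_eq]
  rw [Set.ncard_insert_of_notMem, Set.ncard_pair]
  · simp only [ne_eq, Prod.mk.injEq, not_and]
    intro h1 h2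
    exact hb h1
  · simp only [Set.mem_insert_iff, Set.mem_singleton_iff, Prod.mk.injEq, not_or]
    exact ⟨fun ⟨h1, h2⟩ => hb h2, fun ⟨h1, h2⟩ => ha h1⟩

include horb canc2 canc3 in
lemma sl3_card_case6 (a b : ZMod l) (ha : a ≠ -1) (hb : b ≠ -1) (hab : a + b ≠ -2) :
    Nat.card (MulAction.orbit (Subgroup.closure {σ₁, σ₂}) ((a, b) : ZMod l × ZMod l)) = 6 := by
  rw [horb, Nat.card_coe_set_eq]
  rw [Set.ncard_insert_of_notMem, Set.ncard_insert_of_notMem,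
    Set.ncard_insert_of_notMem, Set.ncard_insert_of_notMem, Set.ncard_pair]
  · -- (b, -a-b-3) ≠ (-b-2, -a-2)
    simp only [ne_eq, Prod.mk.injEq, not_and]
    intro h1 h2
    exact hb (canc2 b (-1) (by linear_combination h1))
  · -- (-a-b-3, a) ∉ {(b,-a-b-3), (-b-2,-a-2)}
    simp only [Set.mem_insert_iff, Set.mem_singleton_iff, Prod.mk.injEq, not_or]
    exact ⟨fun ⟨h1, h2⟩ => ha (canc3 a (-1) (by linear_combination h1 + 2*h2)),
      fun ⟨h1, h2⟩ => ha (by linear_combination -h1)⟩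
  · -- (a+b+1, -b-2) ∉ {(-a-b-3,a), (b,-a-b-3), (-b-2,-a-2)}
    simp only [Set.mem_insert_iff, Set.mem_singleton_iff, Prod.mk.injEq, not_or]
    exact ⟨fun ⟨h1, h2⟩ => hab (canc2 (a+b) (-2) (by linear_combination h1)),
      fun ⟨h1, h2⟩ => ha (by linear_combination h1),
      fun ⟨h1, h2⟩ => hb (canc3 b (-1) (by linear_combination h1 - h2))⟩
  · -- (-a-2, a+b+1) ∉ rest
    simp only [Set.mem_insert_iff, Set.mem_singleton_iff, Prod.mk.injEq, not_or]
    exact ⟨fun ⟨h1, h2⟩ => hb (canc3 b (-1) (by linear_combination h1 + 2*h2)),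
      fun ⟨h1, h2⟩ => hb (by linear_combination h2),
      fun ⟨h1, h2⟩ => hab (by linear_combination -h1),
      fun ⟨h1, h2⟩ => ha (canc3 a (-1) (by linear_combination h2 - h1))⟩
  · -- (a,b) ∉ rest
    simp only [Set.mem_insert_iff, Set.mem_singleton_iff, Prod.mk.injEq, not_or]
    exact ⟨fun ⟨h1, h2⟩ => ha (canc2 a (-1) (by linear_combination h1)),
      fun ⟨h1, h2⟩ => hb (canc2 b (-1) (by linear_combination h2)),
      fun ⟨h1, h2⟩ => ha (canc3 a (-1) (by linear_combination h1 - h2)),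
      fun ⟨h1, h2⟩ => hb (canc3 b (-1) (by linear_combination h2 - h1)),
      fun ⟨h1, h2⟩ => hab (by linear_combination h1)⟩

include horb in
lemma sl3_card_st :
    Nat.card (MulAction.orbit (Subgroup.closure {σ₁, σ₂}) ((-1, -1) : ZMod l × ZMod l)) = 1 := by
  rw [sl3_orbit_st horb, Nat.card_coe_set_eq, Set.ncard_singleton]

end CardAux


section IsoAux
variable {l : ℕ} {σ₁ σ₂ : Equiv.Perm (ZMod l × ZMod l)}

lemma sl3_perm3_enum : ∀ τ : Equiv.Perm (Fin 3), τ = 1 ∨ τ = Equiv.swap 0 1 ∨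
    τ = Equiv.swap 1 2 ∨ τ = Equiv.swap 1 2 * Equiv.swap 0 1 ∨
    τ = Equiv.swap 0 1 * Equiv.swap 1 2 ∨
    τ = Equiv.swap 1 2 * Equiv.swap 0 1 * Equiv.swap 1 2 := by decide

lemma sl3_iso
    (hσ₁ : ∀ a b : ZMod l, σ₁ (a, b) = (-a - 2, a + b + 1))
    (hσ₂ : ∀ a b : ZMod l, σ₂ (a, b) = (a + b + 1, -b - 2))
    (hE : (Subgroup.closure {σ₁, σ₂} : Set (Equiv.Perm (ZMod l × ZMod l))) = sl3E σ₁ σ₂)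
    (h1 : (1 : ZMod l) ≠ 0) (h2 : (2 : ZMod l) ≠ 0) :
    Nonempty ((Subgroup.closure {σ₁, σ₂} :
      Subgroup (Equiv.Perm (ZMod l × ZMod l))) ≃* Equiv.Perm (Fin 3)) := by
  set G := Subgroup.closure {σ₁, σ₂} with hG
  have hsm : σ₁ ∈ G := Subgroup.subset_closure (by simp)
  have htm : σ₂ ∈ G := Subgroup.subset_closure (by simp)
  set s' : G := ⟨σ₁, hsm⟩ with hs'
  set t' : G := ⟨σ₂, htm⟩ with ht'
  set T : Fin 3 → ZMod l × ZMod l := fun i => if i = 0 then (-1, 0) else if i = 1 then (0, -2) else (-2, -1)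
    with hT
  have hT0 : T 0 = ((-1 : ZMod l), (0 : ZMod l)) := rfl
  have hT1 : T 1 = ((0 : ZMod l), (-2 : ZMod l)) := rfl
  have hT2 : T 2 = ((-2 : ZMod l), (-1 : ZMod l)) := rfl
  -- distinctness of the three points
  have d01 : T 0 ≠ T 1 := by
    rw [hT0, hT1]; intro h
    exact h1 (by linear_combination -(congrArg Prod.fst h))
  have d02 : T 0 ≠ T 2 := by
    rw [hT0, hT2]; intro h
    exact h1 (by linear_combination (congrArg Prod.fst h))
  have d12 : T 1 ≠ T 2 := by
    rw [hT1, hT2]; intro h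
    exact h2 (by linear_combination (congrArg Prod.fst h))
  have Tinj : Function.Injective T := by
    intro i j h
    fin_cases i <;> fin_cases j <;>
      first
        | rfl
        | exact absurd h d01 | exact absurd h d02 | exact absurd h d12
        | exact absurd h.symm d01 | exact absurd h.symm d02 | exact absurd h.symm d12
  -- evaluation of the generators on the three points
  have vs0 : σ₁ (T 0) = T 0 := by
    rw [hT0]; rw [hσ₁]; simp only [Prod.mk.injEq]; constructor <;> ring
  have vs1 : σ₁ (T 1) = T 2 := by
    rw [hT1, hT2]; rw [hσ₁]; simp only [Prod.mk.injEq]; constructor <;> ring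
  have vs2 : σ₁ (T 2) = T 1 := by
    rw [hT2, hT1]; rw [hσ₁]; simp only [Prod.mk.injEq]; constructor <;> ring
  have vt0 : σ₂ (T 0) = T 1 := by
    rw [hT0, hT1]; rw [hσ₂]; simp only [Prod.mk.injEq]; constructor <;> ring
  have vt1 : σ₂ (T 1) = T 0 := by
    rw [hT1, hT0]; rw [hσ₂]; simp only [Prod.mk.injEq]; constructor <;> ring
  have vt2 : σ₂ (T 2) = T 2 := by
    rw [hT2]; rw [hσ₂]; simp only [Prod.mk.injEq]; constructor <;> ring
  have hmaps : ∀ g : G, ∀ i : Fin 3, ∃ j : Fin 3, (g : Equiv.Perm (ZMod l × ZMod l)) (T i) = T j := by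
    rintro ⟨g, hg⟩ i
    have hgE : g ∈ sl3E σ₁ σ₂ := by rw [← hE]; exact hg
    simp only [sl3E, Set.mem_insert_iff, Set.mem_singleton_iff] at hgE
    rcases hgE with rfl|rfl|rfl|rfl|rfl|rfl
    · exact ⟨i, rfl⟩
    · fin_cases i
      exacts [⟨0, vs0⟩, ⟨2, vs1⟩, ⟨1, vs2⟩]
    · fin_cases i
      exacts [⟨1, vt0⟩, ⟨0, vt1⟩, ⟨2, vt2⟩]
    · fin_cases i
      · exact ⟨2, by show (σ₁ * σ₂) (T 0) = T 2; rw [Equiv.Perm.mul_apply, vt0, vs1]⟩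
      · exact ⟨0, by show (σ₁ * σ₂) (T 1) = T 0; rw [Equiv.Perm.mul_apply, vt1, vs0]⟩
      · exact ⟨1, by show (σ₁ * σ₂) (T 2) = T 1; rw [Equiv.Perm.mul_apply, vt2, vs2]⟩
    · fin_cases i
      · exact ⟨1, by show (σ₂ * σ₁) (T 0) = T 1; rw [Equiv.Perm.mul_apply, vs0, vt0]⟩
      · exact ⟨2, by show (σ₂ * σ₁) (T 1) = T 2; rw [Equiv.Perm.mul_apply, vs1, vt2]⟩
      · exact ⟨0, by show (σ₂ * σ₁) (T 2) = T 0; rw [Equiv.Perm.mul_apply, vs2, vt1]⟩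
    · fin_cases i
      · exact ⟨2, by show (σ₁ * σ₂ * σ₁) (T 0) = T 2; rw [Equiv.Perm.mul_apply, Equiv.Perm.mul_apply, vs0, vt0, vs1]⟩
      · exact ⟨1, by show (σ₁ * σ₂ * σ₁) (T 1) = T 1; rw [Equiv.Perm.mul_apply, Equiv.Perm.mul_apply, vs1, vt2, vs2]⟩
      · exact ⟨0, by show (σ₁ * σ₂ * σ₁) (T 2) = T 0; rw [Equiv.Perm.mul_apply, Equiv.Perm.mul_apply, vs2, vt1, vs0]⟩
  classical
  set act : G → Fin 3 → Fin 3 := fun g i => (hmaps g i).choose with hactdef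
  have hact : ∀ (g : G) (i : Fin 3), (g : Equiv.Perm (ZMod l × ZMod l)) (T i) = T (act g i) :=
    fun g i => (hmaps g i).choose_spec
  have act_unique : ∀ (g : G) (i j : Fin 3), (g : Equiv.Perm (ZMod l × ZMod l)) (T i) = T j → act g i = j := by
    intro g i j h
    apply Tinj
    rw [← hact g i, h]
  have act_one : ∀ i, act 1 i = i := by
    intro i
    exact act_unique 1 i i (by rw [OneMemClass.coe_one, Equiv.Perm.one_apply])
  have act_mul : ∀ (g h : G) (i : Fin 3), act (g * h) i = act g (act h i) := by
    intro g h i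
    apply act_unique
    rw [Subgroup.coe_mul, Equiv.Perm.mul_apply, hact h i, hact g (act h i)]
  letI actSMul : SMul G (Fin 3) := ⟨act⟩
  letI actMA : MulAction G (Fin 3) := { one_smul := act_one, mul_smul := fun g h i => act_mul g h i }
  set φ : G →* Equiv.Perm (Fin 3) := MulAction.toPermHom G (Fin 3) with hφ
  have hφapp : ∀ (g : G) (i : Fin 3), φ g i = act g i := fun g i => rfl
  have hφs : φ s' = Equiv.swap 1 2 := by
    apply Equiv.ext
    intro i
    fin_cases i
    · rw [hφapp, act_unique s' 0 0 vs0]; decide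
    · rw [hφapp, act_unique s' 1 2 vs1]; decide
    · rw [hφapp, act_unique s' 2 1 vs2]; decide
  have hφt : φ t' = Equiv.swap 0 1 := by
    apply Equiv.ext
    intro i
    fin_cases i
    · rw [hφapp, act_unique t' 0 1 vt0]; decide
    · rw [hφapp, act_unique t' 1 0 vt1]; decide
    · rw [hφapp, act_unique t' 2 2 vt2]; decide
  have hinj : Function.Injective φ := by
    rw [injective_iff_map_eq_one]
    rintro ⟨g, hg⟩ hgone
    have hfix : ∀ i : Fin 3, g (T i) = T i := by
      intro i
      have : act ⟨g, hg⟩ i = i := by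
        rw [← hφapp ⟨g, hg⟩ i, hgone, Equiv.Perm.one_apply]
      rw [show g (T i) = ((⟨g, hg⟩ : G) : Equiv.Perm (ZMod l × ZMod l)) (T i) from rfl, hact ⟨g, hg⟩ i, this]
    have hgE : g ∈ sl3E σ₁ σ₂ := by rw [← hE]; exact hg
    simp only [sl3E, Set.mem_insert_iff, Set.mem_singleton_iff] at hgE
    apply Subtype.ext
    rcases hgE with rfl|rfl|rfl|rfl|rfl|rfl
    · rfl
    · exact absurd (vs1.symm.trans (hfix 1)) d12.symm
    · exact absurd (vt0.symm.trans (hfix 0)) d01.symm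
    · exact absurd ((by rw [Equiv.Perm.mul_apply, vt0, vs1] :
        (σ₁ * σ₂) (T 0) = T 2).symm.trans (hfix 0)) d02.symm
    · exact absurd ((by rw [Equiv.Perm.mul_apply, vs0, vt0] :
        (σ₂ * σ₁) (T 0) = T 1).symm.trans (hfix 0)) d01.symm
    · exact absurd ((by rw [Equiv.Perm.mul_apply, Equiv.Perm.mul_apply, vs0, vt0, vs1] :
        (σ₁ * σ₂ * σ₁) (T 0) = T 2).symm.trans (hfix 0)) d02.symm
  have hsurj : Function.Surjective φ := by
    intro τ
    rcases sl3_perm3_enum τ with rfl|rfl|rfl|rfl|rfl|rfl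
    · exact ⟨1, map_one φ⟩
    · exact ⟨t', hφt⟩
    · exact ⟨s', hφs⟩
    · exact ⟨s' * t', by rw [map_mul, hφs, hφt]⟩
    · exact ⟨t' * s', by rw [map_mul, hφt, hφs]⟩
    · exact ⟨s' * t' * s', by rw [map_mul, map_mul, hφs, hφt]⟩
  exact ⟨MulEquiv.ofBijective φ ⟨hinj, hsurj⟩⟩

end IsoAux

section CountAux
variable {l : ℕ} [NeZero l] {σ₁ σ₂ : Equiv.Perm (ZMod l × ZMod l)}

lemma sl3_counts (hl5 : 5 ≤ l)
    (horb : ∀ a b : ZMod l,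
      MulAction.orbit (Subgroup.closure {σ₁, σ₂}) ((a, b) : ZMod l × ZMod l) =
        {(a,b), (-a-2, a+b+1), (a+b+1, -b-2), (-a-b-3, a), (b, -a-b-3), (-b-2, -a-2)})
    (canc2 : ∀ x y : ZMod l, 2*x = 2*y → x = y)
    (canc3 : ∀ x y : ZMod l, 3*x = 3*y → x = y) :
    Nat.card {o : MulAction.orbitRel.Quotient (Subgroup.closure {σ₁, σ₂})
        (ZMod l × ZMod l) // Nat.card o.orbit = 1} = 1 ∧
    Nat.card {o : MulAction.orbitRel.Quotient (Subgroup.closure {σ₁, σ₂})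
        (ZMod l × ZMod l) // Nat.card o.orbit = 3} = l - 1 ∧
    Nat.card {o : MulAction.orbitRel.Quotient (Subgroup.closure {σ₁, σ₂})
        (ZMod l × ZMod l) // Nat.card o.orbit = 6} = (l - 1) * (l - 2) / 6 ∧
    Nat.card (MulAction.orbitRel.Quotient (Subgroup.closure {σ₁, σ₂})
        (ZMod l × ZMod l)) = 1 + (l - 1) + (l - 1) * (l - 2) / 6 := by
  classical
  haveI : Finite (MulAction.orbitRel.Quotient (Subgroup.closure {σ₁, σ₂})
      (ZMod l × ZMod l)) := Quotient.finite _
  haveI : Fintype (MulAction.orbitRel.Quotient (Subgroup.closure {σ₁, σ₂})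
      (ZMod l × ZMod l)) := Fintype.ofFinite _
  -- abbreviation for the orbit-size function
  set f : MulAction.orbitRel.Quotient (Subgroup.closure {σ₁, σ₂})
      (ZMod l × ZMod l) → ℕ := fun o => Nat.card o.orbit with hf
  have hfmk : ∀ a b : ZMod l, f (Quotient.mk'' (a, b)) =
      Nat.card (MulAction.orbit (Subgroup.closure {σ₁, σ₂}) ((a, b) : ZMod l × ZMod l)) := by
    intro a b
    rw [hf]
    simp only
    rw [MulAction.orbitRel.Quotient.orbit_mk]
  -- the three case lemmas
  have hc1 : ∀ a b : ZMod l, a = -1 → b = -1 → f (Quotient.mk'' (a, b)) = 1 := by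
    rintro a b rfl rfl
    rw [hfmk, sl3_orbit_st horb, Nat.card_coe_set_eq, Set.ncard_singleton]
  have hc2 : ∀ b : ZMod l, b ≠ -1 → f (Quotient.mk'' (-1, b)) = 3 := by
    intro b hb
    rw [hfmk]; exact sl3_card_case2 horb canc2 b hb
  have hc3 : ∀ a : ZMod l, a ≠ -1 → f (Quotient.mk'' (a, -1)) = 3 := by
    intro a ha
    rw [hfmk]; exact sl3_card_case3 horb a ha
  have hc4 : ∀ a b : ZMod l, a + b = -2 → a ≠ -1 → b ≠ -1 → f (Quotient.mk'' (a, b)) = 3 := by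
    intro a b hab ha hb
    rw [hfmk]; exact sl3_card_case4 horb a b hab ha hb
  have hc6 : ∀ a b : ZMod l, a ≠ -1 → b ≠ -1 → a + b ≠ -2 → f (Quotient.mk'' (a, b)) = 6 := by
    intro a b ha hb hab
    rw [hfmk]; exact sl3_card_case6 horb canc2 canc3 a b ha hb hab
  -- trichotomy
  have htri : ∀ o, f o = 1 ∨ f o = 3 ∨ f o = 6 := by
    intro o
    refine Quotient.inductionOn' o ?_
    rintro ⟨a, b⟩
    by_cases ha : a = -1
    · subst ha
      by_cases hb : b = -1
      · subst hb; exact Or.inl (hc1 _ _ rfl rfl)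
      · exact Or.inr (Or.inl (hc2 b hb))
    · by_cases hb : b = -1
      · subst hb; exact Or.inr (Or.inl (hc3 a ha))
      · by_cases hab : a + b = -2
        · exact Or.inr (Or.inl (hc4 a b hab ha hb))
        · exact Or.inr (Or.inr (hc6 a b ha hb hab))
  -- characterization of the singleton orbit
  have hone_iff : ∀ o, f o = 1 ↔ o = Quotient.mk'' ((-1, -1) : ZMod l × ZMod l) := by
    intro o
    refine Quotient.inductionOn' o ?_
    rintro ⟨a, b⟩
    constructor
    · intro h1
      by_cases ha : a = -1
      · subst ha
        by_cases hb : b = -1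
        · subst hb; rfl
        · rw [hc2 b hb] at h1; omega
      · by_cases hb : b = -1
        · subst hb; rw [hc3 a ha] at h1; omega
        · by_cases hab : a + b = -2
          · rw [hc4 a b hab ha hb] at h1; omega
          · rw [hc6 a b ha hb hab] at h1; omega
    · intro h; rw [h]; exact hc1 _ _ rfl rfl
  -- representation of 3-orbits
  have h3rep : ∀ a b : ZMod l, f (Quotient.mk'' (a, b)) = 3 →
      ∃ c : ZMod l, c ≠ -1 ∧
        (Quotient.mk'' ((a, b) : ZMod l × ZMod l) :
          MulAction.orbitRel.Quotient (Subgroup.closure {σ₁, σ₂}) (ZMod l × ZMod l)) =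
          Quotient.mk'' ((-1, c) : ZMod l × ZMod l) := by
    intro a b h3
    by_cases ha : a = -1
    · subst ha
      by_cases hb : b = -1
      · rw [hc1 _ _ rfl hb] at h3; omega
      · exact ⟨b, hb, rfl⟩
    · by_cases hb : b = -1
      · subst hb
        refine ⟨-a-2, fun h => ha (by linear_combination -h), ?_⟩
        apply Quotient.sound'
        show _ ∈ MulAction.orbit _ _
        rw [sl3_orbit_case2 horb]
        right; right
        show ((a : ZMod l), (-1 : ZMod l)) = _
        exact Prod.ext (by ring) (by ring)
      · by_cases hab : a + b = -2
        · refine ⟨a, ha, ?_⟩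
          apply Quotient.sound'
          show _ ∈ MulAction.orbit _ _
          rw [sl3_orbit_case2 horb]
          right; left
          exact Prod.ext (by ring) (by linear_combination hab)
        · rw [hc6 a b ha hb hab] at h3; omega
  -- injectivity of the parametrization of 3-orbits
  have hinj3 : ∀ b c : ZMod l, b ≠ -1 → c ≠ -1 →
      (Quotient.mk'' ((-1, b) : ZMod l × ZMod l) :
        MulAction.orbitRel.Quotient (Subgroup.closure {σ₁, σ₂}) (ZMod l × ZMod l)) =
        Quotient.mk'' ((-1, c) : ZMod l × ZMod l) → b = c := by
    intro b c hb hc h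
    have hmem : ((-1, b) : ZMod l × ZMod l) ∈
        MulAction.orbit (Subgroup.closure {σ₁, σ₂}) ((-1, c) : ZMod l × ZMod l) :=
      Quotient.exact' h
    rw [sl3_orbit_case2 horb] at hmem
    simp only [Set.mem_insert_iff, Set.mem_singleton_iff, Prod.mk.injEq] at hmem
    rcases hmem with ⟨h1, h2⟩ | ⟨h1, h2⟩ | ⟨h1, h2⟩
    · exact h2
    · exact absurd h1.symm hc
    · exact absurd h2 hb
  -- cardinality of the whole space
  have hX : Fintype.card (ZMod l × ZMod l) = l * l := by
    rw [Fintype.card_prod, ZMod.card]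
  letI : ∀ o : MulAction.orbitRel.Quotient (Subgroup.closure {σ₁, σ₂})
      (ZMod l × ZMod l), Fintype o.orbit := fun o => Fintype.ofFinite _
  have hsig : Fintype.card (ZMod l × ZMod l) = ∑ o, f o := by
    calc Fintype.card (ZMod l × ZMod l)
        = Fintype.card ((o : MulAction.orbitRel.Quotient (Subgroup.closure {σ₁, σ₂})
            (ZMod l × ZMod l)) × o.orbit) :=
          Fintype.card_congr (MulAction.selfEquivSigmaOrbits' _ _)
      _ = ∑ o, Fintype.card o.orbit := Fintype.card_sigma
      _ = ∑ o, f o := Finset.sum_congr rfl fun o _ => (Nat.card_eq_fintype_card).symm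
  set A1 := Finset.univ.filter (fun o => f o = 1) with hA1def
  set A3 := Finset.univ.filter (fun o => f o = 3) with hA3def
  set A6 := Finset.univ.filter (fun o => f o = 6) with hA6def
  have hcover : (A1 ∪ A3) ∪ A6 = Finset.univ := by
    apply Finset.eq_univ_iff_forall.mpr
    intro o
    simp only [hA1def, hA3def, hA6def, Finset.mem_union, Finset.mem_filter, Finset.mem_univ,
      true_and]
    rcases htri o with h | h | h
    · exact Or.inl (Or.inl h)
    · exact Or.inl (Or.inr h)
    · exact Or.inr h
  have hd13 : Disjoint A1 A3 := by
    rw [Finset.disjoint_left]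
    intro o h1 h3
    simp only [hA1def, hA3def, Finset.mem_filter] at h1 h3
    omega
  have hd136 : Disjoint (A1 ∪ A3) A6 := by
    rw [Finset.disjoint_left]
    intro o h13 h6
    simp only [hA1def, hA3def, hA6def, Finset.mem_union, Finset.mem_filter] at h13 h6
    omega
  have hcard_split : Fintype.card (MulAction.orbitRel.Quotient (Subgroup.closure {σ₁, σ₂})
      (ZMod l × ZMod l)) = A1.card + A3.card + A6.card := by
    rw [← Finset.card_univ, ← hcover, Finset.card_union_of_disjoint hd136,
      Finset.card_union_of_disjoint hd13]
  have hsum_split : ∑ o, f o = A1.card * 1 + A3.card * 3 + A6.card * 6 := by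
    have s1 : ∑ o ∈ A1, f o = A1.card * 1 := by
      rw [Finset.sum_congr rfl (fun o ho => (Finset.mem_filter.mp ho).2), Finset.sum_const,
        smul_eq_mul]
    have s3 : ∑ o ∈ A3, f o = A3.card * 3 := by
      rw [Finset.sum_congr rfl (fun o ho => (Finset.mem_filter.mp ho).2), Finset.sum_const,
        smul_eq_mul]
    have s6 : ∑ o ∈ A6, f o = A6.card * 6 := by
      rw [Finset.sum_congr rfl (fun o ho => (Finset.mem_filter.mp ho).2), Finset.sum_const,
        smul_eq_mul]
    rw [← hcover, Finset.sum_union hd136, Finset.sum_union hd13, s1, s3, s6]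
  have hN1 : Nat.card {o : MulAction.orbitRel.Quotient (Subgroup.closure {σ₁, σ₂})
      (ZMod l × ZMod l) // f o = 1} = A1.card := by
    rw [Nat.card_eq_fintype_card]
    exact Fintype.card_of_subtype A1 (fun o => by simp [hA1def])
  have hN3 : Nat.card {o : MulAction.orbitRel.Quotient (Subgroup.closure {σ₁, σ₂})
      (ZMod l × ZMod l) // f o = 3} = A3.card := by
    rw [Nat.card_eq_fintype_card]
    exact Fintype.card_of_subtype A3 (fun o => by simp [hA3def])
  have hN6 : Nat.card {o : MulAction.orbitRel.Quotient (Subgroup.closure {σ₁, σ₂})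
      (ZMod l × ZMod l) // f o = 6} = A6.card := by
    rw [Nat.card_eq_fintype_card]
    exact Fintype.card_of_subtype A6 (fun o => by simp [hA6def])
  have hA1card : A1.card = 1 := by
    have : A1 = {(Quotient.mk'' ((-1, -1) : ZMod l × ZMod l) :
        MulAction.orbitRel.Quotient (Subgroup.closure {σ₁, σ₂}) (ZMod l × ZMod l))} := by
      apply Finset.ext
      intro o
      simp only [hA1def, Finset.mem_filter, Finset.mem_univ, true_and, Finset.mem_singleton]
      exact hone_iff o
    rw [this, Finset.card_singleton]
  have hA3card : A3.card = l - 1 := by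
    have hbij : Function.Bijective (fun bc : {b : ZMod l // b ≠ -1} =>
        (⟨Quotient.mk'' ((-1, bc.1) : ZMod l × ZMod l), hc2 bc.1 bc.2⟩ :
          {o : MulAction.orbitRel.Quotient (Subgroup.closure {σ₁, σ₂})
            (ZMod l × ZMod l) // f o = 3})) := by
      constructor
      · rintro ⟨b, hb⟩ ⟨c, hc⟩ h
        exact Subtype.ext (hinj3 b c hb hc (congrArg Subtype.val h))
      · rintro ⟨o, ho⟩
        revert ho
        refine Quotient.inductionOn' o ?_
        rintro ⟨a, b⟩ ho
        obtain ⟨c, hc, hoc⟩ := h3rep a b ho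
        exact ⟨⟨c, hc⟩, Subtype.ext hoc.symm⟩
    have key : Fintype.card {o : MulAction.orbitRel.Quotient (Subgroup.closure {σ₁, σ₂})
        (ZMod l × ZMod l) // f o = 3} = Fintype.card {b : ZMod l // b ≠ -1} :=
      (Fintype.card_congr (Equiv.ofBijective _ hbij)).symm
    have hne : Fintype.card {b : ZMod l // b ≠ -1} = l - 1 := by
      have h1 := Fintype.card_subtype_compl (fun b : ZMod l => b = -1)
      rw [Fintype.card_subtype_eq, ZMod.card] at h1
      exact h1
    have hA3' : Fintype.card {o : MulAction.orbitRel.Quotient (Subgroup.closure {σ₁, σ₂})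
        (ZMod l × ZMod l) // f o = 3} = A3.card :=
      Fintype.card_of_subtype A3 (fun o => by simp [hA3def])
    rw [← hA3', key, hne]
  have h66 : 6 * A6.card = (l - 1) * (l - 2) := by
    have heq : l * l = 1 + (l - 1) * 3 + A6.card * 6 := by
      rw [← hX, hsig, hsum_split, hA1card, hA3card]
    zify [show 1 ≤ l from by omega, show 2 ≤ l from by omega] at heq ⊢
    linear_combination -heq
  have hA6card : A6.card = (l - 1) * (l - 2) / 6 :=
    (Nat.div_eq_of_eq_mul_right (by norm_num) h66.symm).symm
  refine ⟨hN1.trans hA1card, hN3.trans hA3card, hN6.trans hA6card, ?_⟩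
  rw [Nat.card_eq_fintype_card, hcard_split, hA1card, hA3card, hA6card]

end CountAux

/-- **Section 7.2 (sl₃ blocks)**: for odd `l ≥ 5` with `3 ∤ l`, the shifted simple
reflections `σ₁(a,b) = (-a-2, a+b+1)` and `σ₂(a,b) = (a+b+1, -b-2)` on
`P/lP = ZMod l × ZMod l` generate a subgroup `G ≅ S₃` of order 6
(`σ₁² = σ₂² = (σ₁σ₂)³ = 1`); the `G`-action has exactly one singleton orbit,
namely `{(-1,-1)}` (the Steinberg weight), exactly `l-1` orbits of cardinality 3
and exactly `(l-1)(l-2)/6` orbits of cardinality 6, so the total number of orbits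
is `1 + (l-1) + (l-1)(l-2)/6`. -/
theorem sl3_dot_action_orbits (l : ℕ) (hl : Odd l) (hl5 : 5 ≤ l) (hl3 : ¬ (3 ∣ l))
    (σ₁ σ₂ : Equiv.Perm (ZMod l × ZMod l))
    (hσ₁ : ∀ a b : ZMod l, σ₁ (a, b) = (-a - 2, a + b + 1))
    (hσ₂ : ∀ a b : ZMod l, σ₂ (a, b) = (a + b + 1, -b - 2)) :
    σ₁ * σ₁ = 1 ∧ σ₂ * σ₂ = 1 ∧ (σ₁ * σ₂) ^ 3 = 1 ∧
    Nat.card (Subgroup.closure {σ₁, σ₂} : Subgroup (Equiv.Perm (ZMod l × ZMod l)))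
      = 6 ∧
    Nonempty ((Subgroup.closure {σ₁, σ₂} :
        Subgroup (Equiv.Perm (ZMod l × ZMod l))) ≃* Equiv.Perm (Fin 3)) ∧
    MulAction.orbit (Subgroup.closure {σ₁, σ₂}) ((-1, -1) : ZMod l × ZMod l) =
      {(-1, -1)} ∧
    Nat.card {o : MulAction.orbitRel.Quotient (Subgroup.closure {σ₁, σ₂})
        (ZMod l × ZMod l) // Nat.card o.orbit = 1} = 1 ∧
    Nat.card {o : MulAction.orbitRel.Quotient (Subgroup.closure {σ₁, σ₂})
        (ZMod l × ZMod l) // Nat.card o.orbit = 3} = l - 1 ∧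
    Nat.card {o : MulAction.orbitRel.Quotient (Subgroup.closure {σ₁, σ₂})
        (ZMod l × ZMod l) // Nat.card o.orbit = 6} = (l - 1) * (l - 2) / 6 ∧
    Nat.card (MulAction.orbitRel.Quotient (Subgroup.closure {σ₁, σ₂})
        (ZMod l × ZMod l)) = 1 + (l - 1) + (l - 1) * (l - 2) / 6 := by
  haveI : NeZero l := ⟨by omega⟩
  haveI : Fact (1 < l) := ⟨by omega⟩
  have h2nd : ¬ (2 ∣ l) := by obtain ⟨k, rfl⟩ := hl; omega
  have h2u : IsUnit (2 : ZMod l) := by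
    have := ZMod.isUnit_prime_of_not_dvd Nat.prime_two h2nd
    simpa using this
  have h3u : IsUnit (3 : ZMod l) := by
    have := ZMod.isUnit_prime_of_not_dvd Nat.prime_three hl3
    simpa using this
  have canc2 : ∀ x y : ZMod l, 2*x = 2*y → x = y := fun x y h => h2u.mul_left_cancel h
  have canc3 : ∀ x y : ZMod l, 3*x = 3*y → x = y := fun x y h => h3u.mul_left_cancel h
  have h1ne : (1 : ZMod l) ≠ 0 := one_ne_zero
  have h2ne : (2 : ZMod l) ≠ 0 := h2u.ne_zero
  have r1 := sl3_r1 hσ₁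
  have r2 := sl3_r2 hσ₂
  have r3 := sl3_r3 hσ₁ hσ₂
  have rsts := sl3_rsts hσ₁ hσ₂
  have hE := sl3_closure_eq r1 r2 rsts
  have horb := sl3_orbit hσ₁ hσ₂ hE (sl3_e3 hσ₁ hσ₂) (sl3_e4 hσ₁ hσ₂) (sl3_e5 hσ₁ hσ₂)
  obtain ⟨iso⟩ := sl3_iso hσ₁ hσ₂ hE h1ne h2ne
  have hcardG : Nat.card (Subgroup.closure {σ₁, σ₂} :
      Subgroup (Equiv.Perm (ZMod l × ZMod l))) = 6 := by
    rw [Nat.card_congr iso.toEquiv, Nat.card_eq_fintype_card]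
    simp [Fintype.card_perm, Nat.factorial]
  obtain ⟨c1, c3, c6, cT⟩ := sl3_counts hl5 horb canc2 canc3
  exact ⟨r1, r2, r3, hcardG, ⟨iso⟩, sl3_orbit_st horb, c1, c3, c6, cT⟩
end

section
/- Let l ≥ 3 be an odd integer. Let ι be the ℂ-algebra automorphism of the Laurent polynomial ring ℂ[x, x⁻¹] determined by ι(x) = x⁻¹ (induced by negation on ℤ in AddMonoidAlgebra ℂ ℤ), let A be the subalgebra of ι-invariant Laurent polynomials, and let I be the ideal of A generated by x^l + x^{-l} - 2. Then the quotient ℂ-algebra A/I has dimension l over ℂ, and is isomorphic as a ℂ-algebra to the product ℂ × (ℂ[X]/(X²))^{(l-1)/2}, i.e. the product of one copy of ℂ with (l-1)/2 copies of the dual numbers over ℂ. -/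
set_option synthInstance.maxHeartbeats 1000000
set_option maxHeartbeats 1000000
open LaurentPolynomial

/-- The algebra automorphism `ι` of `ℂ[x, x⁻¹]` with `ι(x) = x⁻¹`, induced by
negation on `ℤ` in `AddMonoidAlgebra ℂ ℤ`. -/
noncomputable def laurentInv : LaurentPolynomial ℂ ≃ₐ[ℂ] LaurentPolynomial ℂ :=
  AddMonoidAlgebra.domCongr ℂ ℂ (AddEquiv.neg ℤ)

/-- The subalgebra `A = ℂ[x + x⁻¹]` of `ι`-invariant Laurent polynomials. -/
noncomputable def symmLaurent : Subalgebra ℂ (LaurentPolynomial ℂ) :=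
  AlgHom.equalizer laurentInv.toAlgHom (AlgHom.id ℂ (LaurentPolynomial ℂ))

/-- The ideal of `A` generated by `x^l + x^{-l} - 2`. -/
noncomputable def steinbergIdeal (l : ℕ) : Ideal symmLaurent :=
  Ideal.span {a : symmLaurent |
    (a : LaurentPolynomial ℂ) = T (l : ℤ) + T (-(l : ℤ)) - 2}

section Aux

open Polynomial Finset DualNumber

noncomputable def phiSL : Polynomial ℂ →ₐ[ℂ] LaurentPolynomial ℂ :=
  Polynomial.aeval (T 1 + T (-1))

lemma phiSL_X : phiSL X = T 1 + T (-1) := by rw [phiSL, aeval_X]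

lemma phiSL_C (a : ℂ) : phiSL (Polynomial.C a) = algebraMap ℂ (LaurentPolynomial ℂ) a := by
  rw [phiSL, Polynomial.aeval_C]

lemma phiSL_dickson (n : ℕ) :
    phiSL (Polynomial.dickson 1 1 n) = T (n : ℤ) + T (-(n : ℤ)) := by
  rw [phiSL, aeval_def, ← eval_map, Polynomial.map_dickson, map_one,
    dickson_one_one_eval_add_inv _ _ (by rw [← T_add]; norm_num), T_pow, T_pow]
  norm_num

noncomputable def evAtSL (t : ℂˣ) : LaurentPolynomial ℂ →ₐ[ℂ] ℂ :=
  AddMonoidAlgebra.lift ℂ ℂ ℤ ((Units.coeHom ℂ).comp (zpowersHom ℂˣ t))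

lemma evAtSL_T (t : ℂˣ) (n : ℤ) : evAtSL t (T n) = ((t ^ n : ℂˣ) : ℂ) := by
  rw [evAtSL, T, AddMonoidAlgebra.lift_single]; simp

lemma znip_inj : Function.Injective (fun n : ℕ => ((n : ℂ) + 1) + ((n : ℂ) + 1)⁻¹) := by
  intro a b h
  simp only at h
  set x : ℂ := (a : ℂ) + 1 with hx
  set y : ℂ := (b : ℂ) + 1 with hy
  have hx0 : x ≠ 0 := by
    simp [hx]; intro hc; have := congrArg Complex.re hc; simp at this
    linarith [Nat.cast_nonneg (α := ℝ) a]
  have hy0 : y ≠ 0 := by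
    simp [hy]; intro hc; have := congrArg Complex.re hc; simp at this
    linarith [Nat.cast_nonneg (α := ℝ) b]
  have key : (x - y) * (x * y - 1) = 0 := by
    field_simp at h
    linear_combination h
  rcases mul_eq_zero.1 key with h1 | h1
  · have h2 : ((a : ℂ) + 1) = ((b : ℂ) + 1) := by rw [hx, hy] at h1; linear_combination h1
    have : (a : ℂ) = b := by linear_combination h2
    exact_mod_cast this
  · have h2 : ((a + 1) * (b + 1) : ℕ) = ((1 : ℕ) : ℂ) := by
      push_cast; rw [hx, hy] at h1; linear_combination h1
    have h3 : (a + 1) * (b + 1) = 1 := Nat.cast_injective h2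
    have h4 := Nat.eq_one_of_mul_eq_one_right h3
    have h5 := Nat.eq_one_of_mul_eq_one_left h3
    omega

lemma phiSL_injective : Function.Injective phiSL := by
  have h : ∀ p : ℂ[X], phiSL p = 0 → p = 0 := by
    intro p hp
    apply Polynomial.eq_zero_of_infinite_isRoot
    apply Set.infinite_of_injective_forall_mem
      (f := fun n : ℕ => ((n:ℂ)+1) + ((n:ℂ)+1)⁻¹) znip_inj
    intro n
    have hn : ((n : ℂ) + 1) ≠ 0 := by
      intro hc; have := congrArg Complex.re hc; simp at this
      linarith [Nat.cast_nonneg (α := ℝ) n]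
    set t : ℂˣ := Units.mk0 _ hn with ht
    have h4 := Polynomial.aeval_algHom_apply (evAtSL t) (T 1 + T (-1)) p
    rw [← phiSL, hp, map_zero] at h4
    have h5 : evAtSL t (T 1 + T (-1)) = ((n:ℂ)+1) + ((n:ℂ)+1)⁻¹ := by
      rw [map_add, evAtSL_T, evAtSL_T]
      simp [ht]
    rw [h5] at h4
    simp only [Set.mem_setOf_eq, IsRoot.def]
    rw [← Polynomial.coe_aeval_eq_eval, ← h4]
  intro p q hpq
  have h0 : phiSL (p - q) = 0 := by rw [map_sub, hpq, sub_self]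
  exact sub_eq_zero.mp (h _ h0)

noncomputable instance : CoeFun (LaurentPolynomial ℂ) (fun _ => ℤ → ℂ) := ⟨fun f => f.coeff⟩

noncomputable def sglSL (n : ℤ) (c : ℂ) : LaurentPolynomial ℂ := AddMonoidAlgebra.single n c

lemma sglSL_apply (n m : ℤ) (c : ℂ) : sglSL n c m = if n = m then c else 0 :=
  Finsupp.single_apply

lemma sglSL_eq (n : ℤ) (c : ℂ) : sglSL n c = LaurentPolynomial.C c * T n :=
  single_eq_C_mul_T c n

lemma mem_range_of_bounded (N : ℕ) : ∀ f : LaurentPolynomial ℂ,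
    (∀ n : ℤ, f (-n) = f n) → (∀ n : ℤ, (N : ℤ) < |n| → f n = 0) →
    f ∈ phiSL.range := by
  induction N with
  | zero =>
    intro f hs hv
    have hf : f = AddMonoidAlgebra.single 0 (f 0) := by
      ext n
      rcases eq_or_ne n 0 with rfl | hn
      · simp
      · rw [hv n (by simpa using hn), AddMonoidAlgebra.coeff_single, Finsupp.single_apply, if_neg (Ne.symm hn)]
    rw [hf, show (AddMonoidAlgebra.single 0 (f 0) : LaurentPolynomial ℂ)
        = algebraMap ℂ (LaurentPolynomial ℂ) (f 0) by
      rw [← LaurentPolynomial.C_eq_algebraMap,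
        show (AddMonoidAlgebra.single (0:ℤ) (f 0) : LaurentPolynomial ℂ)
          = LaurentPolynomial.C (f 0) * T 0 from single_eq_C_mul_T _ 0, T_zero, mul_one]]
    exact ⟨Polynomial.C (f 0), by show phiSL _ = _; rw [phiSL, Polynomial.aeval_C]⟩
  | succ N ih =>
    intro f hs hv
    set c : ℂ := f ((N : ℤ) + 1) with hc
    set g : LaurentPolynomial ℂ :=
      f - (sglSL ((N:ℤ)+1) c + sglSL (-((N:ℤ)+1)) c) with hg
    have hgapp : ∀ n : ℤ, g n = f n
        - ((if ((N:ℤ)+1) = n then c else 0) + (if -((N:ℤ)+1) = n then c else 0)) := by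
      intro n
      rw [hg, AddMonoidAlgebra.coeff_sub, Finsupp.sub_apply, AddMonoidAlgebra.coeff_add, Finsupp.add_apply, sglSL_apply, sglSL_apply]
    have hgs : ∀ n : ℤ, g (-n) = g n := by
      intro n
      have e1 : (((N:ℤ)+1) = -n) ↔ ((-((N:ℤ)+1)) = n) := by omega
      have e2 : ((-((N:ℤ)+1)) = -n) ↔ (((N:ℤ)+1) = n) := by omega
      rw [hgapp, hgapp, hs n]
      simp only [e1, e2]
      ring
    have hgv : ∀ n : ℤ, (N : ℤ) < |n| → g n = 0 := by
      intro n hn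
      rcases eq_or_ne n ((N:ℤ)+1) with rfl | h1
      · rw [hgapp, if_pos rfl, if_neg (by omega), ← hc]; ring
      rcases eq_or_ne n (-((N:ℤ)+1)) with rfl | h2
      · rw [hgapp, if_neg (by omega), if_pos rfl]
        have hfc : f (-((N:ℤ)+1)) = c := (hs _).trans hc.symm
        rw [hfc]; ring
      · rw [hgapp, if_neg (Ne.symm h1), if_neg (Ne.symm h2),
          hv n (by rcases abs_choice n with h | h <;> omega)]
        ring
    have hgmem := ih g hgs hgv
    have key : f = g + LaurentPolynomial.C c * (T ((N:ℤ)+1) + T (-((N:ℤ)+1))) := by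
      rw [hg, mul_add, ← sglSL_eq, ← sglSL_eq]
      ring
    rw [key]
    refine Subalgebra.add_mem _ hgmem ⟨Polynomial.C c * Polynomial.dickson 1 1 (N+1), ?_⟩
    show phiSL (Polynomial.C c * Polynomial.dickson 1 1 (N+1)) = _
    rw [map_mul, phiSL_dickson, phiSL, Polynomial.aeval_C, ← LaurentPolynomial.C_eq_algebraMap]
    push_cast
    ring

lemma laurentInv_T (n : ℤ) : laurentInv (T n) = T (-n) := by
  rw [laurentInv, show (T n : LaurentPolynomial ℂ) = AddMonoidAlgebra.single n 1 from rfl]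
  exact AddMonoidAlgebra.domCongr_single _ _ _

lemma phiSL_range : phiSL.range = symmLaurent := by
  apply le_antisymm
  · rintro x ⟨p, rfl⟩
    show laurentInv.toAlgHom (phiSL p) = AlgHom.id ℂ _ (phiSL p)
    show laurentInv (phiSL p) = phiSL p
    rw [phiSL]
    have h := Polynomial.aeval_algHom_apply laurentInv (T 1 + T (-1)) p
    rw [← h]
    congr 1
    rw [map_add, laurentInv_T, laurentInv_T]
    ring_nf
  · intro f hf
    have hs : ∀ n : ℤ, f (-n) = f n := by
      intro n
      have h1 : laurentInv f = f := hf
      have h2 : (laurentInv f) n = f (-n) := by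
        rw [laurentInv, AddMonoidAlgebra.coeff_domCongr]
        congr 1
      rw [← h2, h1]
    apply mem_range_of_bounded (f.coeff.support.sup Int.natAbs) f hs
    intro n hn
    by_contra hfn
    have hmem : n ∈ f.coeff.support := Finsupp.mem_support_iff.2 hfn
    have := Finset.le_sup (f := Int.natAbs) hmem
    rcases abs_choice n with h | h <;> omega

lemma reindexSL {M : Type*} [CommMonoid M] (m : ℕ) (G : ℕ → M) :
    ∏ j ∈ range (2*m+1), G j = G 0 * ∏ k ∈ range m, (G (k+1) * G (2*m - k)) := by
  have h0 : ∏ j ∈ range (2*m+1), G j = G 0 * ∏ j ∈ Ico 1 (2*m+1), G j := by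
    rw [range_eq_Ico, Finset.prod_eq_prod_Ico_succ_bot (by omega) G]
  have hsplit : (∏ j ∈ Ico 1 (m+1), G j) * ∏ j ∈ Ico (m+1) (2*m+1), G j
      = ∏ j ∈ Ico 1 (2*m+1), G j :=
    Finset.prod_Ico_consecutive G (by omega) (by omega)
  have h1 : ∏ j ∈ Ico 1 (m+1), G j = ∏ k ∈ range m, G (k+1) := by
    rw [Finset.prod_Ico_eq_prod_range]
    simp only [Nat.add_sub_cancel]
    exact Finset.prod_congr rfl fun k _ => by rw [add_comm]
  have h2 : ∏ j ∈ Ico (m+1) (2*m+1), G j = ∏ k ∈ range m, G (2*m - k) := by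
    rw [Finset.prod_Ico_eq_prod_range]
    have h3 : 2*m+1 - (m+1) = m := by omega
    rw [h3, ← Finset.prod_range_reflect (fun k => G (2*m - k)) m]
    refine Finset.prod_congr rfl fun k hk => ?_
    rw [mem_range] at hk
    congr 1
    omega
  rw [h0, prod_mul_distrib, ← h1, ← h2, hsplit]

lemma prod_zetaSL (l : ℕ) (hl : 0 < l) (ζ : ℂ) (hζ : IsPrimitiveRoot ζ l) :
    ∏ j ∈ range l, (X - Polynomial.C (ζ^j)) = X^l - 1 := by
  have himg : Polynomial.nthRootsFinset l (1 : ℂ) = (range l).image (ζ ^ ·) := by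
    symm
    apply Finset.eq_of_subset_of_card_le
    · intro x hx
      simp only [mem_image, mem_range] at hx
      obtain ⟨j, hj, rfl⟩ := hx
      rw [Polynomial.mem_nthRootsFinset hl, ← pow_mul, mul_comm, pow_mul, hζ.pow_eq_one,
        one_pow]
    · rw [hζ.card_nthRootsFinset, card_image_of_injOn, card_range]
      intro i hi j hj hij
      exact hζ.pow_inj (mem_range.1 hi) (mem_range.1 hj) hij
  rw [X_pow_sub_one_eq_prod hl hζ, himg, prod_image]
  intro i hi j hj hij
  exact hζ.pow_inj (mem_range.1 hi) (mem_range.1 hj) hij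

lemma lemASL (a b : ℂ) (h : a * b = 1) :
    (T 1 + T (-1)) - algebraMap ℂ (LaurentPolynomial ℂ) (a + b)
      = T (-1) * ((T 1 - algebraMap ℂ (LaurentPolynomial ℂ) a)
        * (T 1 - algebraMap ℂ (LaurentPolynomial ℂ) b)) := by
  have huv : (T 1 * T (-1) : LaurentPolynomial ℂ) = 1 := by rw [← T_add]; norm_num
  have hab : algebraMap ℂ (LaurentPolynomial ℂ) a * algebraMap ℂ (LaurentPolynomial ℂ) b
      = 1 := by rw [← map_mul, h, map_one]
  rw [map_add]
  linear_combination (algebraMap ℂ (LaurentPolynomial ℂ) a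
    + algebraMap ℂ (LaurentPolynomial ℂ) b - T 1) * huv - T (-1) * hab

noncomputable def ccSL (m : ℕ) (ζ : ℂ) (j : ℕ) : ℂ := ζ^j + ζ^(2*m+1-j)

noncomputable def PPSL (m : ℕ) (ζ : ℂ) : Polynomial ℂ :=
  (X - Polynomial.C (ccSL m ζ 0)) * ∏ k ∈ range m, (X - Polynomial.C (ccSL m ζ (k+1)))^2

lemma phiSL_PPSL (m : ℕ) (ζ : ℂ) (hζ : IsPrimitiveRoot ζ (2*m+1)) :
    phiSL (PPSL m ζ) = T ((2*m+1 : ℕ) : ℤ) + T (-((2*m+1 : ℕ) : ℤ)) - 2 := by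
  have hζl : ζ ^ (2*m+1) = 1 := hζ.pow_eq_one
  set A : ℂ →+* LaurentPolynomial ℂ := algebraMap ℂ (LaurentPolynomial ℂ) with hA
  set G : ℕ → LaurentPolynomial ℂ := fun j => T 1 - A (ζ^j) with hG
  have h1 : phiSL (PPSL m ζ) = ((T 1 + T (-1)) - A (ccSL m ζ 0))
      * ∏ k ∈ range m, ((T 1 + T (-1)) - A (ccSL m ζ (k+1)))^2 := by
    rw [PPSL, map_mul, map_sub, map_prod, phiSL_X, phiSL_C]
    refine congrArg _ (Finset.prod_congr rfl fun k _ => ?_)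
    rw [map_pow, map_sub, phiSL_X, phiSL_C]
  have hstep : ∀ j : ℕ, j ≤ 2*m+1 → (T 1 + T (-1)) - A (ccSL m ζ j)
      = T (-1) * (G j * G (2*m+1 - j)) := by
    intro j hj
    rw [ccSL, hG]
    exact lemASL _ _ (by rw [← pow_add, show j + (2*m+1-j) = 2*m+1 by omega, hζl])
  have hGl : G (2*m+1) = G 0 := by rw [hG]; simp [hζl]
  have h2 : ∀ k ∈ range m, ((T 1 + T (-1)) - A (ccSL m ζ (k+1)))^2
      = (T (-1) * (G (k+1) * G (2*m - k)))^2 := by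
    intro k hk
    rw [mem_range] at hk
    rw [hstep (k+1) (by omega), show 2*m+1 - (k+1) = 2*m - k by omega]
  rw [h1, hstep 0 (by omega), Finset.prod_congr rfl h2]
  have h3 : ∏ k ∈ range m, (T (-1) * (G (k+1) * G (2*m - k)))^2
      = (T (-1) : LaurentPolynomial ℂ)^(2*m)
        * (∏ k ∈ range m, (G (k+1) * G (2*m - k)))^2 := by
    rw [Finset.prod_pow, Finset.prod_mul_distrib, Finset.prod_const, card_range, mul_pow,
      ← pow_mul]
    ring
  rw [h3, show 2*m+1-0 = 2*m+1 from rfl, hGl]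
  have hPr : ∏ j ∈ range (2*m+1), G j = (T 1 : LaurentPolynomial ℂ)^(2*m+1) - 1 := by
    have h4 := congrArg (Polynomial.aeval (T 1 : LaurentPolynomial ℂ))
      (prod_zetaSL (2*m+1) (by omega) ζ hζ)
    rw [map_prod, map_sub, map_pow, aeval_X, map_one] at h4
    rw [← h4]
    exact Finset.prod_congr rfl fun j _ => by rw [map_sub, aeval_X, Polynomial.aeval_C]
  have hkey : T (-1) * (G 0 * G 0)
        * (T (-1) ^ (2*m) * (∏ k ∈ range m, G (k+1) * G (2*m-k))^2)
      = T (-1)^(2*m+1) * (∏ j ∈ range (2*m+1), G j)^2 := by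
    rw [reindexSL m G, mul_pow]
    ring
  rw [hkey, hPr, T_pow, T_pow]
  have hWV : (T (((2*m+1 : ℕ) : ℤ)) : LaurentPolynomial ℂ)
      * T (((2*m+1 : ℕ) : ℤ) * (-1)) = 1 := by
    rw [← T_add, show (((2*m+1:ℕ):ℤ)) + (((2*m+1:ℕ):ℤ) * (-1)) = 0 by ring, T_zero]
  rw [show (((2*m+1 : ℕ):ℤ) * (1:ℤ)) = ((2*m+1 : ℕ) : ℤ) by ring,
    show (-((2*m+1 : ℕ) : ℤ)) = (((2*m+1 : ℕ):ℤ) * (-1)) by ring]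
  linear_combination (T (((2*m+1:ℕ):ℤ)) - 2) * hWV

lemma ccSL_inj (m : ℕ) (ζ : ℂ) (hζ : IsPrimitiveRoot ζ (2*m+1)) :
    ∀ i j : ℕ, i ≤ m → j ≤ m → ccSL m ζ i = ccSL m ζ j → i = j := by
  intro i j hi hj h
  have haa : ζ^i * ζ^(2*m+1-i) = 1 := by
    rw [← pow_add, show i + (2*m+1-i) = 2*m+1 by omega, hζ.pow_eq_one]
  have hbb : ζ^j * ζ^(2*m+1-j) = 1 := by
    rw [← pow_add, show j + (2*m+1-j) = 2*m+1 by omega, hζ.pow_eq_one]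
  rw [ccSL, ccSL] at h
  have key : (ζ^i - ζ^j) * (ζ^i - ζ^(2*m+1-j)) = 0 := by
    linear_combination hbb - haa + (ζ^i) * h
  rcases mul_eq_zero.1 key with h1 | h1
  · exact hζ.pow_inj (by omega) (by omega) (by linear_combination h1)
  · have h2 : ζ^i = ζ^(2*m+1-j) := by linear_combination h1
    rcases Nat.eq_zero_or_pos j with rfl | hj1
    · have h3 : ζ^i = ζ^0 := by
        rw [h2, show 2*m+1-0 = 2*m+1 from rfl, hζ.pow_eq_one, pow_zero]
      exact hζ.pow_inj (by omega) (by omega) h3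
    · have := hζ.pow_inj (show i < 2*m+1 by omega) (show 2*m+1-j < 2*m+1 by omega) h2
      omega

noncomputable def dEquivSL (a : ℂ) :
    (ℂ[X] ⧸ Ideal.span {(X - Polynomial.C a)^2}) ≃ₐ[ℂ] DualNumber ℂ := by
  have hvan : ∀ p : ℂ[X], p ∈ Ideal.span {(X - Polynomial.C a)^2} →
      (Polynomial.aeval (algebraMap ℂ (DualNumber ℂ) a + ε)) p = 0 := by
    intro p hp
    obtain ⟨q, rfl⟩ := Ideal.mem_span_singleton.1 hp
    rw [map_mul, map_pow, map_sub, aeval_X, Polynomial.aeval_C, add_sub_cancel_left, sq,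
      eps_mul_eps, zero_mul]
  refine AlgEquiv.ofAlgHom
    (Ideal.Quotient.liftₐ _ (Polynomial.aeval (algebraMap ℂ (DualNumber ℂ) a + ε)) hvan)
    (DualNumber.lift ⟨(Algebra.ofId ℂ _, Ideal.Quotient.mk _ (X - Polynomial.C a)), ?_,
      fun r => mul_comm _ _⟩)
    ?_ ?_
  · rw [← map_mul, ← sq, Ideal.Quotient.eq_zero_iff_mem]
    exact Ideal.subset_span (Set.mem_singleton _)
  · apply DualNumber.algHom_ext
    rw [AlgHom.comp_apply, DualNumber.lift_apply_eps]
    show (Ideal.Quotient.liftₐ _ _ hvan) (Ideal.Quotient.mk _ (X - Polynomial.C a)) = ε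
    rw [Ideal.Quotient.liftₐ_apply]
    show (Polynomial.aeval (algebraMap ℂ (DualNumber ℂ) a + ε)) (X - Polynomial.C a) = ε
    rw [map_sub, aeval_X, Polynomial.aeval_C, add_sub_cancel_left]
  · apply Ideal.Quotient.algHom_ext
    apply Polynomial.algHom_ext
    rw [AlgHom.comp_apply, AlgHom.comp_apply, AlgHom.comp_apply]
    rw [Ideal.Quotient.mkₐ_eq_mk]
    show (DualNumber.lift _) ((Ideal.Quotient.liftₐ _ _ hvan) (Ideal.Quotient.mk _ X)) = _
    rw [Ideal.Quotient.liftₐ_apply]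
    show (DualNumber.lift _) ((Polynomial.aeval (algebraMap ℂ (DualNumber ℂ) a + ε)) X) = _
    rw [aeval_X, map_add, DualNumber.lift_apply_eps, AlgHom.commutes]
    show algebraMap ℂ _ a
        + (Ideal.Quotient.mk (Ideal.span {(X - Polynomial.C a)^2})) (X - Polynomial.C a)
      = (AlgHom.id ℂ _) ((Ideal.Quotient.mk (Ideal.span {(X - Polynomial.C a)^2})) X)
    rw [AlgHom.id_apply,
      ← ((Ideal.Quotient.mkₐ ℂ (Ideal.span {(X - Polynomial.C a)^2})).commutes a),
      Ideal.Quotient.mkₐ_eq_mk, ← map_add]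
    congr 1
    rw [Polynomial.algebraMap_eq]
    ring

noncomputable def prodCongrAlg {A B C D : Type*} [Semiring A] [Semiring B] [Semiring C]
    [Semiring D] [Algebra ℂ A] [Algebra ℂ B] [Algebra ℂ C] [Algebra ℂ D]
    (f : A ≃ₐ[ℂ] B) (g : C ≃ₐ[ℂ] D) : (A × C) ≃ₐ[ℂ] (B × D) :=
  AlgEquiv.ofRingEquiv (f := RingEquiv.prodCongr f.toRingEquiv g.toRingEquiv)
    (fun x => by
      ext
      · show f (algebraMap ℂ A x) = algebraMap ℂ B x
        rw [AlgEquiv.commutes]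
      · show g (algebraMap ℂ C x) = algebraMap ℂ D x
        rw [AlgEquiv.commutes])

noncomputable def quotInfProdAlg {R : Type*} [CommRing R] [Algebra ℂ R]
    (I J : Ideal R) (h : IsCoprime I J) :
    (R ⧸ (I ⊓ J)) ≃ₐ[ℂ] (R ⧸ I) × (R ⧸ J) :=
  AlgEquiv.ofRingEquiv (f := Ideal.quotientInfEquivQuotientProd I J h)
    (fun x => by
      have h1 : algebraMap ℂ (R ⧸ (I ⊓ J)) x = Ideal.Quotient.mk _ (algebraMap ℂ R x) :=
        ((Ideal.Quotient.mkₐ ℂ _).commutes x).symm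
      rw [h1]
      ext
      · rw [Ideal.quotientInfEquivQuotientProd_fst, Ideal.Quotient.factor_mk]
        exact (Ideal.Quotient.mkₐ ℂ _).commutes x
      · rw [Ideal.quotientInfEquivQuotientProd_snd, Ideal.Quotient.factor_mk]
        exact (Ideal.Quotient.mkₐ ℂ _).commutes x)

noncomputable def quotPiAlg {R : Type*} [CommRing R] [Algebra ℂ R] {ι : Type*} [Finite ι]
    (f : ι → Ideal R) (hf : Pairwise (Function.onFun IsCoprime f)) :
    (R ⧸ ⨅ i, f i) ≃ₐ[ℂ] ∀ i, R ⧸ f i :=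
  AlgEquiv.ofRingEquiv (f := Ideal.quotientInfRingEquivPiQuotient f hf)
    (fun x => by
      have h1 : algebraMap ℂ (R ⧸ ⨅ i, f i) x = Ideal.Quotient.mk _ (algebraMap ℂ R x) :=
        ((Ideal.Quotient.mkₐ ℂ _).commutes x).symm
      rw [h1]
      funext i
      show Ideal.quotientInfToPiQuotient f (Ideal.Quotient.mk _ (algebraMap ℂ R x)) i = _
      rw [Ideal.quotientInfToPiQuotient_mk']
      exact (Ideal.Quotient.mkₐ ℂ _).commutes x)

noncomputable def psiSL : Polynomial ℂ ≃ₐ[ℂ] symmLaurent :=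
  (AlgEquiv.ofInjective phiSL phiSL_injective).trans
    (Subalgebra.equivOfEq _ _ phiSL_range)

lemma psiSL_coe (p : ℂ[X]) : (psiSL p : LaurentPolynomial ℂ) = phiSL p := by
  rw [psiSL]
  rfl

theorem masterSL (l m : ℕ) (hlm : l = 2*m+1) :
    Module.finrank ℂ (symmLaurent ⧸ steinbergIdeal l) = l ∧
    Nonempty ((symmLaurent ⧸ steinbergIdeal l) ≃ₐ[ℂ]
      ℂ × (Fin m → DualNumber ℂ)) := by
  subst hlm
  obtain ⟨ζ, hζ⟩ : ∃ ζ : ℂ, IsPrimitiveRoot ζ (2*m+1) :=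
    ⟨_, Complex.isPrimitiveRoot_exp (2*m+1) (by omega)⟩
  -- ideal identification
  have hIJ : steinbergIdeal (2*m+1)
      = (Ideal.span {PPSL m ζ}).map (psiSL : ℂ[X] →+* symmLaurent) := by
    rw [Ideal.map_span, Set.image_singleton, steinbergIdeal]
    congr 1
    ext a
    simp only [Set.mem_setOf_eq, Set.mem_singleton_iff]
    have hb : ((psiSL (PPSL m ζ) : symmLaurent) : LaurentPolynomial ℂ)
        = T ((2*m+1 : ℕ) : ℤ) + T (-((2*m+1 : ℕ) : ℤ)) - 2 := by
      rw [psiSL_coe, phiSL_PPSL m ζ hζ]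
    constructor
    · intro ha
      exact Subtype.coe_injective (ha.trans hb.symm)
    · rintro rfl
      exact hb
  have E0 : (symmLaurent ⧸ steinbergIdeal (2*m+1)) ≃ₐ[ℂ]
      ℂ[X] ⧸ Ideal.span {PPSL m ζ} :=
    (Ideal.quotientEquivAlg (Ideal.span {PPSL m ζ}) (steinbergIdeal (2*m+1)) psiSL hIJ).symm
  -- distinctness and coprimality
  have hdist : ∀ i j : ℕ, i ≤ m → j ≤ m → i ≠ j → ccSL m ζ i ≠ ccSL m ζ j :=
    fun i j hi hj hij h => hij (ccSL_inj m ζ hζ i j hi hj h)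
  have hlin : ∀ i j : ℕ, i ≤ m → j ≤ m → i ≠ j →
      IsCoprime (X - Polynomial.C (ccSL m ζ i)) (X - Polynomial.C (ccSL m ζ j)) := by
    intro i j hi hj hij
    exact Polynomial.isCoprime_X_sub_C_of_isUnit_sub
      (isUnit_iff_ne_zero.2 (sub_ne_zero.2 (hdist i j hi hj hij)))
  have hcop0 : IsCoprime (X - Polynomial.C (ccSL m ζ 0))
      (∏ k : Fin m, (X - Polynomial.C (ccSL m ζ (k.1+1)))^2) := by
    refine IsCoprime.prod_right fun k _ => ?_
    have hk := k.isLt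
    exact (hlin 0 (k.1+1) (by omega) (by omega) (by omega)).pow_right
  have hpair : ∀ i j : Fin m, i ≠ j →
      IsCoprime ((X - Polynomial.C (ccSL m ζ (i.1+1)))^2)
        ((X - Polynomial.C (ccSL m ζ (j.1+1)))^2) := by
    intro i j hij
    have hi := i.isLt
    have hj := j.isLt
    refine (hlin (i.1+1) (j.1+1) (by omega) (by omega) ?_).pow
    intro h
    exact hij (Fin.ext (by omega))
  -- ideal splitting
  have hPQ : PPSL m ζ = (X - Polynomial.C (ccSL m ζ 0))
      * ∏ k : Fin m, (X - Polynomial.C (ccSL m ζ (k.1+1)))^2 := by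
    rw [PPSL]
    exact congrArg _
      (Fin.prod_univ_eq_prod_range (fun j => (X - Polynomial.C (ccSL m ζ (j+1)))^2) m).symm
  have hId1 : Ideal.span {PPSL m ζ}
      = Ideal.span {(X - Polynomial.C (ccSL m ζ 0))}
        ⊓ Ideal.span {∏ k : Fin m, (X - Polynomial.C (ccSL m ζ (k.1+1)))^2} := by
    rw [Ideal.inf_eq_mul_of_isCoprime ((Ideal.isCoprime_span_singleton_iff _ _).2 hcop0),
      Ideal.span_singleton_mul_span_singleton, hPQ]
  have hId2 : Ideal.span {∏ k : Fin m, (X - Polynomial.C (ccSL m ζ (k.1+1)))^2}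
      = ⨅ k : Fin m, Ideal.span {(X - Polynomial.C (ccSL m ζ (k.1+1)))^2} :=
    (Ideal.iInf_span_singleton fun i j hij => hpair i j hij).symm
  have E1 : (ℂ[X] ⧸ Ideal.span {PPSL m ζ}) ≃ₐ[ℂ]
      (ℂ[X] ⧸ Ideal.span {(X - Polynomial.C (ccSL m ζ 0))})
        × (ℂ[X] ⧸ Ideal.span {∏ k : Fin m, (X - Polynomial.C (ccSL m ζ (k.1+1)))^2}) :=
    (Ideal.quotientEquivAlgOfEq ℂ hId1).trans
      (quotInfProdAlg _ _ ((Ideal.isCoprime_span_singleton_iff _ _).2 hcop0))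
  have E2 : (ℂ[X] ⧸ Ideal.span {∏ k : Fin m, (X - Polynomial.C (ccSL m ζ (k.1+1)))^2})
      ≃ₐ[ℂ] ∀ k : Fin m, ℂ[X] ⧸ Ideal.span {(X - Polynomial.C (ccSL m ζ (k.1+1)))^2} :=
    (Ideal.quotientEquivAlgOfEq ℂ hId2).trans
      (quotPiAlg _ (fun i j hij =>
        (Ideal.isCoprime_span_singleton_iff _ _).2 (hpair i j hij)))
  have E3 : (∀ k : Fin m, ℂ[X] ⧸ Ideal.span {(X - Polynomial.C (ccSL m ζ (k.1+1)))^2})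
      ≃ₐ[ℂ] (Fin m → DualNumber ℂ) :=
    AlgEquiv.piCongrRight (fun k => dEquivSL (ccSL m ζ (k+1)))
  have E4 : (ℂ[X] ⧸ Ideal.span {(X - Polynomial.C (ccSL m ζ 0))}) ≃ₐ[ℂ] ℂ :=
    Polynomial.quotientSpanXSubCAlgEquiv (ccSL m ζ 0)
  have Etot : (symmLaurent ⧸ steinbergIdeal (2*m+1)) ≃ₐ[ℂ]
      ℂ × (Fin m → DualNumber ℂ) :=
    E0.trans (E1.trans (prodCongrAlg E4 (E2.trans E3)))
  refine ⟨?_, ⟨Etot⟩⟩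
  -- dimension count
  have hmon : (PPSL m ζ).Monic := by
    rw [PPSL]
    exact (monic_X_sub_C _).mul
      (monic_prod_of_monic _ _ fun k _ => (monic_X_sub_C _).pow 2)
  have hdeg : (PPSL m ζ).natDegree = 2*m+1 := by
    rw [PPSL, Polynomial.natDegree_mul (Polynomial.X_sub_C_ne_zero _)
      (Finset.prod_ne_zero_iff.2 fun k _ => pow_ne_zero _ (Polynomial.X_sub_C_ne_zero _)),
      Polynomial.natDegree_X_sub_C,
      Polynomial.natDegree_prod _ _ (fun k _ => pow_ne_zero _ (Polynomial.X_sub_C_ne_zero _))]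
    simp [Polynomial.natDegree_pow, Polynomial.natDegree_X_sub_C]
    omega
  have hfr : Module.finrank ℂ (ℂ[X] ⧸ Ideal.span {PPSL m ζ}) = 2*m+1 := by
    have := (AdjoinRoot.powerBasis (K := ℂ) (f := PPSL m ζ) hmon.ne_zero).finrank
    rw [AdjoinRoot.powerBasis_dim] at this
    rw [← hdeg]
    exact this
  rw [E0.toLinearEquiv.finrank_eq, hfr]

end Aux

/-- **Section 7.1 (structure of 𝔑 ≅ 𝔷̃ for sl₂)**: for odd `l ≥ 3`, the quotient of
the algebra of `ι`-invariant Laurent polynomials `ℂ[x + x⁻¹]` by the ideal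
generated by `x^l + x^{-l} - 2` has dimension `l` over `ℂ` and is isomorphic as a
`ℂ`-algebra to `ℂ × (ℂ[ε]/(ε²))^{(l-1)/2}`, i.e. one copy of `ℂ` (the Steinberg
block) and `(l-1)/2` copies of the dual numbers (the regular blocks). -/
theorem sl2_grothendieck_ring_structure (l : ℕ) (hl : Odd l) (hl3 : 3 ≤ l) :
    Module.finrank ℂ (symmLaurent ⧸ steinbergIdeal l) = l ∧
    Nonempty ((symmLaurent ⧸ steinbergIdeal l) ≃ₐ[ℂ]
      ℂ × (Fin ((l - 1) / 2) → DualNumber ℂ)) := by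
  have hodd := Nat.odd_iff.mp hl
  have hm : l = 2 * ((l - 1) / 2) + 1 := by omega
  exact masterSL l ((l - 1) / 2) hm
end
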